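/- arXiv:2205.09012 — 3 statements merged into one kernel-verified Lean document; each statement's English description precedes it below -/
import Mathlib

section
/- Every 2k-tree-connected multigraph G with bi(G) ≥ k contains a subgraph H of maximum degree at most 2k with bi(H) ≥ k. -/
set_option linter.unusedSectionVars false


namespace MG

variable {V E : Type} [Fintype V] [Fintype E] [DecidableEq V] [DecidableEq E]

/-- Degree of `v` in the spanning subgraph with edge set `S`; loops count twice. -/
def deg (ends : E → V × V) (S : Finset E) (v : V) : ℕ :=
  (S.filter fun e => (ends e).1 = v).card + (S.filter fun e => (ends e).2 = v).card

/-- Edges of `S` with exactly one end in `A`. -/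
def cut (ends : E → V × V) (S : Finset E) (A : Finset V) : Finset E :=
  S.filter fun e => ¬ (((ends e).1 ∈ A) ↔ ((ends e).2 ∈ A))

/-- Edges of `S` with both ends in `A`. -/
def inside (ends : E → V × V) (S : Finset E) (A : Finset V) : Finset E :=
  S.filter fun e => (ends e).1 ∈ A ∧ (ends e).2 ∈ A

/-- `m`-edge-connected: every edge cut has at least `m` edges. -/
def EdgeConn (ends : E → V × V) (m : ℕ) : Prop :=
  ∀ A : Finset V, A.Nonempty → A ≠ Finset.univ → m ≤ (cut ends Finset.univ A).card

/-- Essentially `lam`-edge-connected: every edge cut of size `< lam` has all its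
edges incident with one common vertex. -/
def EssEdgeConn (ends : E → V × V) (lam : ℕ) : Prop :=
  ∀ A : Finset V, A.Nonempty → A ≠ Finset.univ →
    (cut ends Finset.univ A).card < lam →
      ∃ v : V, ∀ e ∈ cut ends Finset.univ A, (ends e).1 = v ∨ (ends e).2 = v

/-- The edge set `S` induces a bipartite graph. -/
def BipOn (ends : E → V × V) (S : Finset E) : Prop :=
  ∃ X : Finset V, ∀ e ∈ S, ¬ (((ends e).1 ∈ X) ↔ ((ends e).2 ∈ X))

/-- Edges of `S` not crossing the bipartition `(X, Xᶜ)`. -/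
def bad (ends : E → V × V) (S : Finset E) (X : Finset V) : Finset E :=
  S.filter fun e => (((ends e).1 ∈ X) ↔ ((ends e).2 ∈ X))

/-- The bipartite index: fewest edge deletions making the graph `(V, S)` bipartite. -/
def biIndexOn (ends : E → V × V) (S : Finset E) : ℕ :=
  Finset.univ.inf' Finset.univ_nonempty fun X : Finset V => (bad ends S X).card

/-- Adjacency via an edge of `S`. -/
def adjOn (ends : E → V × V) (S : Finset E) (a b : V) : Prop :=
  ∃ e ∈ S, ends e = (a, b) ∨ ends e = (b, a)

/-- The spanning subgraph with edge set `S` is connected. -/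
def ConnOn (ends : E → V × V) (S : Finset E) : Prop :=
  ∀ a b : V, Relation.ReflTransGen (adjOn ends S) a b

/-- `T` is the edge set of a spanning tree. -/
def IsSpTree (ends : E → V × V) (T : Finset E) : Prop :=
  ConnOn ends T ∧ T.card + 1 = Fintype.card V

/-- `m`-tree-connected inside `S`: `m` pairwise edge-disjoint spanning trees using edges of `S`. -/
def TreeConnOn (ends : E → V × V) (m : ℕ) (S : Finset E) : Prop :=
  ∃ T : Fin m → Finset E, (∀ i, T i ⊆ S ∧ IsSpTree ends (T i)) ∧
    ∀ i j, i ≠ j → Disjoint (T i) (T j)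

/-- `C` is the edge set of an odd cycle: odd, nonempty, 2-regular on its support and
connected on its support. -/
def IsOddCycle (ends : E → V × V) (C : Finset E) : Prop :=
  C.Nonempty ∧ Odd C.card ∧ (∀ v : V, deg ends C v = 0 ∨ deg ends C v = 2) ∧
    ∀ a b : V, 0 < deg ends C a → 0 < deg ends C b →
      Relation.ReflTransGen (adjOn ends C) a b

/-- `f` is compatible with the graph with respect to the bipartition `(X, Xᶜ)`. -/
def CompatAt (ends : E → V × V) {k : ℕ} (f : V → ZMod k) (X : Finset V) : Prop :=
  (∃ x : ℕ, x ≤ (inside ends Finset.univ X).card ∧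
    (∑ v ∈ X, f v) - ((2 * x : ℕ) : ZMod k) = ∑ v ∈ Xᶜ, f v) ∨
  (∃ y : ℕ, y ≤ (inside ends Finset.univ Xᶜ).card ∧
    (∑ v ∈ X, f v) = (∑ v ∈ Xᶜ, f v) - ((2 * y : ℕ) : ZMod k))

end MG


namespace Stmt12Aux

open Finset

variable {V E : Type} [Fintype V] [Fintype E] [DecidableEq V] [DecidableEq E]

/-- crossing indicator -/
def xi (ends : E → V × V) (U : Finset V) (e : E) : ℕ :=
  if ((ends e).1 ∈ U ↔ (ends e).2 ∈ U) then 0 else 1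

def phi (ends : E → V × V) (v : V) (W : Finset V) (e : E) : ℕ :=
  if (ends e).1 = v then (if (ends e).2 ∈ W then 1 else 0)
  else if (ends e).2 = v then (if (ends e).1 ∈ W then 1 else 0)
  else xi ends W e

def psi (ends : E → V × V) (v : V) (W : Finset V) (e : E) : ℕ :=
  if (ends e).1 = v then (if (ends e).2 ∈ W then 1 else 0)
  else if (ends e).2 = v then (if (ends e).1 ∈ W then 1 else 0)
  else (if (ends e).1 ∈ W then 1 else 0) + (if (ends e).2 ∈ W then 1 else 0)

lemma phi_step (ends : E → V × V) (v : V) {W U : Finset V} (hW : v ∉ W) (hU : v ∉ U)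
    (e : E) (hnl : (ends e).1 ≠ (ends e).2) :
    phi ends v (W ∪ U) e + xi ends (W ∩ U) e ≤ phi ends v W e + xi ends U e := by
  unfold phi xi
  by_cases h1 : (ends e).1 = v
  · have h2 : (ends e).2 ≠ v := fun h => hnl (h1.trans h.symm)
    by_cases m1 : (ends e).2 ∈ W <;> by_cases m2 : (ends e).2 ∈ U <;>
      simp [h1, h2, m1, m2, hW, hU]
  · by_cases h2 : (ends e).2 = v
    · by_cases m1 : (ends e).1 ∈ W <;> by_cases m2 : (ends e).1 ∈ U <;>
        simp [h1, h2, m1, m2, hW, hU]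
    · by_cases a1 : (ends e).1 ∈ W <;> by_cases a2 : (ends e).1 ∈ U <;>
      by_cases b1 : (ends e).2 ∈ W <;> by_cases b2 : (ends e).2 ∈ U <;>
        simp [h1, h2, a1, a2, b1, b2]

lemma psi_step (ends : E → V × V) (v : V) {W U : Finset V} (hW : v ∉ W) (hU : v ∉ U)
    (e : E) (hnl : (ends e).1 ≠ (ends e).2) :
    psi ends v W e + xi ends U e ≤ psi ends v (W ∪ U) e + xi ends (W ∩ U) e := by
  unfold psi xi
  by_cases h1 : (ends e).1 = v
  · have h2 : (ends e).2 ≠ v := fun h => hnl (h1.trans h.symm)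
    by_cases m1 : (ends e).2 ∈ W <;> by_cases m2 : (ends e).2 ∈ U <;>
      simp [h1, h2, m1, m2, hW, hU]
  · by_cases h2 : (ends e).2 = v
    · by_cases m1 : (ends e).1 ∈ W <;> by_cases m2 : (ends e).1 ∈ U <;>
        simp [h1, h2, m1, m2, hW, hU]
    · by_cases a1 : (ends e).1 ∈ W <;> by_cases a2 : (ends e).1 ∈ U <;>
      by_cases b1 : (ends e).2 ∈ W <;> by_cases b2 : (ends e).2 ∈ U <;>
        simp [h1, h2, a1, a2, b1, b2]

lemma phi_empty (ends : E → V × V) (v : V) (e : E) : phi ends v ∅ e = 0 := by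
  unfold phi xi; simp

lemma xi_compl (ends : E → V × V) (U : Finset V) (e : E) :
    xi ends Uᶜ e = xi ends U e := by
  unfold xi
  by_cases a : (ends e).1 ∈ U <;> by_cases b : (ends e).2 ∈ U <;> simp [a, b]

lemma inv_step (ends : E → V × V) (v : V) (G0 D0 : Finset E)
    (hGnl : ∀ e ∈ G0, (ends e).1 ≠ (ends e).2) (hDnl : ∀ e ∈ D0, (ends e).1 ≠ (ends e).2)
    {W U : Finset V} (hW : v ∉ W) (hU : v ∉ U)
    (htight : ∑ e ∈ G0, xi ends U e = ∑ e ∈ D0, xi ends U e)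
    (hsI : ∑ e ∈ D0, xi ends (W ∩ U) e ≤ ∑ e ∈ G0, xi ends (W ∩ U) e)
    (hinv : ∑ e ∈ G0, phi ends v W e ≤ ∑ e ∈ D0, psi ends v W e) :
    ∑ e ∈ G0, phi ends v (W ∪ U) e ≤ ∑ e ∈ D0, psi ends v (W ∪ U) e := by
  have hA : ∑ e ∈ G0, (phi ends v (W ∪ U) e + xi ends (W ∩ U) e)
      ≤ ∑ e ∈ G0, (phi ends v W e + xi ends U e) :=
    Finset.sum_le_sum fun e he => phi_step ends v hW hU e (hGnl e he)
  have hB : ∑ e ∈ D0, (psi ends v W e + xi ends U e)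
      ≤ ∑ e ∈ D0, (psi ends v (W ∪ U) e + xi ends (W ∩ U) e) :=
    Finset.sum_le_sum fun e he => psi_step ends v hW hU e (hDnl e he)
  rw [Finset.sum_add_distrib] at hA hB
  rw [Finset.sum_add_distrib] at hA hB
  omega

lemma cover_exists (ends : E → V × V) (v : V) (G0 D0 : Finset E)
    (hGnl : ∀ e ∈ G0, (ends e).1 ≠ (ends e).2) (hDnl : ∀ e ∈ D0, (ends e).1 ≠ (ends e).2)
    (hs : ∀ U : Finset V, ∑ e ∈ D0, xi ends U e ≤ ∑ e ∈ G0, xi ends U e)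
    (other : E → V) (F : Finset E)
    (hwit : ∀ e ∈ F, ∃ U : Finset V, v ∉ U ∧
      (∑ e' ∈ G0, xi ends U e' = ∑ e' ∈ D0, xi ends U e') ∧ other e ∈ U) :
    ∃ W : Finset V, v ∉ W ∧
      (∑ e ∈ G0, phi ends v W e ≤ ∑ e ∈ D0, psi ends v W e) ∧ ∀ e ∈ F, other e ∈ W := by
  classical
  induction F using Finset.induction_on with
  | empty =>
      refine ⟨∅, by simp, ?_, by simp⟩
      have h0 : ∑ e ∈ G0, phi ends v ∅ e = 0 :=
        Finset.sum_eq_zero fun e _ => phi_empty ends v e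
      rw [h0]; exact Nat.zero_le _
  | insert _ _ ha ih =>
      rename_i a F'
      obtain ⟨W, hvW, hinv, hcov⟩ := ih (fun e he => hwit e (Finset.mem_insert_of_mem he))
      obtain ⟨U, hvU, htight, hother⟩ := hwit a (Finset.mem_insert_self a F')
      refine ⟨W ∪ U, by simp [hvW, hvU], ?_, ?_⟩
      · exact inv_step ends v G0 D0 hGnl hDnl hvW hvU htight
          (hs (W ∩ U)) hinv
      · intro e he
        rcases Finset.mem_insert.mp he with rfl | he'
        · exact Finset.mem_union_right _ hother
        · exact Finset.mem_union_left _ (hcov e he')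

end Stmt12Aux

namespace Stmt12Aux

open Finset MG

variable {V E : Type} [Fintype V] [Fintype E] [DecidableEq V] [DecidableEq E]

lemma mem_bad_iff (ends : E → V × V) (S : Finset E) (X : Finset V) (e : E) :
    e ∈ MG.bad ends S X ↔ e ∈ S ∧ (((ends e).1 ∈ X) ↔ ((ends e).2 ∈ X)) := by
  unfold MG.bad; exact Finset.mem_filter


lemma bad_parts' (ends : E → V × V) (H : Finset E) (X Y0 : Finset V) :
    MG.bad ends H X =
      ((MG.bad ends H Y0).filter
        (fun e => ((ends e).1 ∈ symmDiff X Y0 ↔ (ends e).2 ∈ symmDiff X Y0)))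
      ∪ ((H \ MG.bad ends H Y0).filter
        (fun e => ¬((ends e).1 ∈ symmDiff X Y0 ↔ (ends e).2 ∈ symmDiff X Y0))) := by
  ext e
  simp only [mem_bad_iff, Finset.mem_union, Finset.mem_filter, Finset.mem_sdiff,
    Finset.mem_symmDiff]
  tauto

lemma xi_eq_ite (ends : E → V × V) (U : Finset V) (e : E) :
    xi ends U e = if ¬((ends e).1 ∈ U ↔ (ends e).2 ∈ U) then 1 else 0 := by
  unfold xi
  by_cases h : ((ends e).1 ∈ U ↔ (ends e).2 ∈ U) <;> simp [h]

lemma card_cross_eq_sum (ends : E → V × V) (U : Finset V) (S : Finset E) :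
    (S.filter (fun e => ¬((ends e).1 ∈ U ↔ (ends e).2 ∈ U))).card = ∑ e ∈ S, xi ends U e := by
  rw [Finset.card_filter]
  exact Finset.sum_congr rfl fun e _ => (xi_eq_ite ends U e).symm

lemma sum_xi_filter_nonloop (ends : E → V × V) (U : Finset V) (S : Finset E) :
    ∑ e ∈ S.filter (fun e => (ends e).1 ≠ (ends e).2), xi ends U e = ∑ e ∈ S, xi ends U e := by
  classical
  rw [← Finset.sum_filter_add_sum_filter_not S (fun e => (ends e).1 ≠ (ends e).2) (xi ends U)]
  have : ∑ e ∈ S.filter (fun e => ¬(ends e).1 ≠ (ends e).2), xi ends U e = 0 := by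
    apply Finset.sum_eq_zero
    intro e he
    rw [Finset.mem_filter] at he
    have hl : (ends e).1 = (ends e).2 := by tauto
    unfold xi; rw [hl]; simp
  omega

lemma card_key (ends : E → V × V) (H : Finset E) (X Y0 : Finset V) :
    (MG.bad ends H X).card + ∑ e ∈ MG.bad ends H Y0, xi ends (symmDiff X Y0) e
      = (MG.bad ends H Y0).card + ∑ e ∈ H \ MG.bad ends H Y0, xi ends (symmDiff X Y0) e := by
  classical
  set U := symmDiff X Y0
  set D := MG.bad ends H Y0
  have h1 : (MG.bad ends H X).card
      = (D.filter (fun e => ((ends e).1 ∈ U ↔ (ends e).2 ∈ U))).card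
        + ((H \ D).filter (fun e => ¬((ends e).1 ∈ U ↔ (ends e).2 ∈ U))).card := by
    rw [bad_parts' ends H X Y0]
    apply Finset.card_union_of_disjoint
    rw [Finset.disjoint_left]
    intro a ha hb
    rw [Finset.mem_filter] at ha hb
    rw [Finset.mem_sdiff] at hb
    exact hb.1.2 ha.1
  have h2 : (D.filter (fun e => ¬((ends e).1 ∈ U ↔ (ends e).2 ∈ U))).card
      + (D.filter (fun e => ((ends e).1 ∈ U ↔ (ends e).2 ∈ U))).card = D.card := by
    rw [add_comm]
    exact Finset.card_filter_add_card_filter_not _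
  rw [← card_cross_eq_sum ends U D, ← card_cross_eq_sum ends U (H \ D)]
  omega


def otherEnd (ends : E → V × V) (v : V) (e : E) : V :=
  if (ends e).1 = v then (ends e).2 else (ends e).1

end Stmt12Aux


open MG Finset

open Stmt12Aux

set_option maxHeartbeats 1000000 in
theorem stmt12 {V E : Type} [Fintype V] [Fintype E] [DecidableEq V] [DecidableEq E]
    (ends : E → V × V) (k : ℕ)
    (htc : TreeConnOn ends (2 * k) Finset.univ)
    (hbi : k ≤ biIndexOn ends Finset.univ) :
    ∃ H : Finset E, (∀ v : V, deg ends H v ≤ 2 * k) ∧ k ≤ biIndexOn ends H := by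
  classical
  set T : Finset (Finset E) :=
    Finset.univ.filter (fun S : Finset E => ∀ X : Finset V, k ≤ (MG.bad ends S X).card) with hTdef
  have hUnivT : (Finset.univ : Finset E) ∈ T := by
    rw [hTdef, Finset.mem_filter]
    refine ⟨Finset.mem_univ _, fun X => le_trans hbi ?_⟩
    exact Finset.inf'_le _ (Finset.mem_univ X)
  obtain ⟨H, hHT, hHmin⟩ := T.exists_min_image Finset.card ⟨_, hUnivT⟩
  have hPhi : ∀ X : Finset V, k ≤ (MG.bad ends H X).card := by
    rw [hTdef, Finset.mem_filter] at hHT; exact hHT.2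
  refine ⟨H, ?_, Finset.le_inf' _ _ (fun X _ => hPhi X)⟩
  intro v
  by_contra hdeg
  push_neg at hdeg
  have hdeg' : 2 * k + 1 ≤ MG.deg ends H v := hdeg
  have herase : ∀ e ∈ H, ∃ X : Finset V, (MG.bad ends H X).card = k ∧ e ∈ MG.bad ends H X := by
    intro e he
    have hnotT : H.erase e ∉ T := by
      intro hT'
      have h1 := hHmin _ hT'
      have h2 := Finset.card_erase_add_one he
      omega
    rw [hTdef, Finset.mem_filter] at hnotT
    push_neg at hnotT
    obtain ⟨X, hX⟩ := hnotT (Finset.mem_univ _)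
    have hbe : MG.bad ends (H.erase e) X = (MG.bad ends H X).erase e := by
      ext x
      simp only [mem_bad_iff, Finset.mem_erase]
      tauto
    rw [hbe] at hX
    have h1 := hPhi X
    by_cases hmem : e ∈ MG.bad ends H X
    · have h2 := Finset.card_erase_add_one hmem
      exact ⟨X, by omega, hmem⟩
    · rw [Finset.erase_eq_of_notMem hmem] at hX; omega
  have hHne : ∃ e, e ∈ H := by
    by_contra hne
    push_neg at hne
    have hH0 : H = ∅ := Finset.eq_empty_of_forall_notMem hne
    rw [hH0] at hdeg'
    unfold MG.deg at hdeg'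
    simp at hdeg'
  obtain ⟨e0, he0⟩ := hHne
  obtain ⟨Y0, hY0card, _⟩ := herase e0 he0
  set D := MG.bad ends H Y0 with hDdef
  have hDsub : D ⊆ H := Finset.filter_subset _ _
  have hloopD : ∀ e ∈ H, (ends e).1 = (ends e).2 → e ∈ D := by
    intro e he hl
    rw [hDdef, mem_bad_iff]
    exact ⟨he, by rw [hl]⟩
  set G0 := (H \ D).filter (fun e => (ends e).1 ≠ (ends e).2) with hG0def
  set D0 := D.filter (fun e => (ends e).1 ≠ (ends e).2) with hD0def
  have hGnl : ∀ e ∈ G0, (ends e).1 ≠ (ends e).2 := by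
    intro e he; rw [hG0def, Finset.mem_filter] at he; exact he.2
  have hDnl : ∀ e ∈ D0, (ends e).1 ≠ (ends e).2 := by
    intro e he; rw [hD0def, Finset.mem_filter] at he; exact he.2
  have hsU : ∀ U : Finset V, ∑ e ∈ D0, xi ends U e ≤ ∑ e ∈ G0, xi ends U e := by
    intro U
    have hkey := card_key ends H (symmDiff U Y0) Y0
    rw [symmDiff_symmDiff_cancel_right] at hkey
    rw [← hDdef] at hkey
    have h1 := hPhi (symmDiff U Y0)
    rw [hD0def, hG0def, sum_xi_filter_nonloop, sum_xi_filter_nonloop]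
    omega
  set F := H.filter (fun e => ((ends e).1 = v ∨ (ends e).2 = v) ∧
      (ends e).1 ≠ (ends e).2 ∧ e ∉ D) with hFdef
  have hwit : ∀ e ∈ F, ∃ U : Finset V, v ∉ U ∧
      (∑ e' ∈ G0, xi ends U e' = ∑ e' ∈ D0, xi ends U e') ∧ otherEnd ends v e ∈ U := by
    intro e heF
    rw [hFdef, Finset.mem_filter] at heF
    have heH := heF.1
    have hatv := heF.2.1
    have hnl := heF.2.2.1
    have heD := heF.2.2.2
    obtain ⟨X, hXcard, heX⟩ := herase e heH
    have hkey := card_key ends H X Y0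
    rw [← hDdef] at hkey
    have htight : ∑ e' ∈ G0, xi ends (symmDiff X Y0) e'
        = ∑ e' ∈ D0, xi ends (symmDiff X Y0) e' := by
      rw [hD0def, hG0def, sum_xi_filter_nonloop, sum_xi_filter_nonloop]
      omega
    have hcross : ¬((ends e).1 ∈ symmDiff X Y0 ↔ (ends e).2 ∈ symmDiff X Y0) := by
      rw [bad_parts' ends H X Y0, Finset.mem_union] at heX
      rcases heX with h | h
      · rw [Finset.mem_filter] at h
        exact absurd h.1 heD
      · rw [Finset.mem_filter] at h
        exact h.2
    have hoe : ∀ U' : Finset V, v ∉ U' →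
        (¬((ends e).1 ∈ U' ↔ (ends e).2 ∈ U')) → otherEnd ends v e ∈ U' := by
      intro U' hvU' hcr
      unfold otherEnd
      rcases hatv with h1 | h2
      · rw [if_pos h1]
        rw [h1] at hcr
        tauto
      · have h1 : (ends e).1 ≠ v := by rw [h2] at hnl; exact hnl
        rw [if_neg h1]
        rw [h2] at hcr
        tauto
    by_cases hvU : v ∈ symmDiff X Y0
    · refine ⟨(symmDiff X Y0)ᶜ, ?_, ?_, ?_⟩
      · simp only [Finset.mem_compl, not_not]
        exact hvU
      · have hc : ∀ e' : E, xi ends ((symmDiff X Y0)ᶜ) e' = xi ends (symmDiff X Y0) e' :=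
          fun e' => xi_compl ends (symmDiff X Y0) e'
        rw [Finset.sum_congr rfl (fun e' _ => hc e'), Finset.sum_congr rfl (fun e' _ => hc e')]
        exact htight
      · refine hoe _ (by simp only [Finset.mem_compl, not_not]; exact hvU) ?_
        simp only [Finset.mem_compl]
        tauto
    · exact ⟨symmDiff X Y0, hvU, htight, hoe _ hvU hcross⟩
  obtain ⟨W, hvW, hinv, hcov⟩ :=
    cover_exists ends v G0 D0 hGnl hDnl hsU (otherEnd ends v) F hwit
  set Lv := D.filter (fun e => (ends e).1 = v ∧ (ends e).2 = v) with hLvdef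
  set Dv := D.filter (fun e => (ends e).1 ≠ (ends e).2 ∧ ((ends e).1 = v ∨ (ends e).2 = v))
    with hDvdef
  set Dr := D.filter (fun e => (ends e).1 ≠ (ends e).2 ∧ ¬((ends e).1 = v ∨ (ends e).2 = v))
    with hDrdef
  have hdeg_eq : MG.deg ends H v
      = ∑ e ∈ H, ((if (ends e).1 = v then 1 else 0) + (if (ends e).2 = v then 1 else 0)) := by
    unfold MG.deg
    rw [Finset.card_filter, Finset.card_filter, ← Finset.sum_add_distrib]
  have hptdeg : ∀ e ∈ H, ((if (ends e).1 = v then 1 else 0) + (if (ends e).2 = v then 1 else 0))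
      ≤ 2 * (if e ∈ Lv then 1 else 0) + (if e ∈ Dv then 1 else 0) + (if e ∈ F then 1 else 0) := by
    intro e he
    by_cases h1 : (ends e).1 = v <;> by_cases h2 : (ends e).2 = v
    · have hL : e ∈ Lv := by
        rw [hLvdef, Finset.mem_filter]
        exact ⟨hloopD e he (h1.trans h2.symm), h1, h2⟩
      rw [if_pos h1, if_pos h2, if_pos hL]
      split_ifs <;> omega
    · have hnl : (ends e).1 ≠ (ends e).2 := by rw [h1]; exact fun h => h2 h.symm
      rw [if_pos h1, if_neg h2]
      by_cases hD : e ∈ D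
      · have hDv : e ∈ Dv := by
          rw [hDvdef, Finset.mem_filter]; exact ⟨hD, hnl, Or.inl h1⟩
        rw [if_pos hDv]
        split_ifs <;> omega
      · have hF : e ∈ F := by
          rw [hFdef, Finset.mem_filter]; exact ⟨he, Or.inl h1, hnl, hD⟩
        rw [if_pos hF]
        split_ifs <;> omega
    · have hnl : (ends e).1 ≠ (ends e).2 := by rw [h2]; exact fun h => h1 h
      rw [if_neg h1, if_pos h2]
      by_cases hD : e ∈ D
      · have hDv : e ∈ Dv := by
          rw [hDvdef, Finset.mem_filter]; exact ⟨hD, hnl, Or.inr h2⟩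
        rw [if_pos hDv]
        split_ifs <;> omega
      · have hF : e ∈ F := by
          rw [hFdef, Finset.mem_filter]; exact ⟨he, Or.inr h2, hnl, hD⟩
        rw [if_pos hF]
        split_ifs <;> omega
    · rw [if_neg h1, if_neg h2]
      split_ifs <;> omega
  have hdeg_le : MG.deg ends H v ≤ 2 * Lv.card + Dv.card + F.card := by
    rw [hdeg_eq]
    calc ∑ e ∈ H, ((if (ends e).1 = v then 1 else 0) + (if (ends e).2 = v then 1 else 0))
        ≤ ∑ e ∈ H, (2 * (if e ∈ Lv then 1 else 0) + (if e ∈ Dv then 1 else 0)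
            + (if e ∈ F then 1 else 0)) := Finset.sum_le_sum hptdeg
      _ = 2 * Lv.card + Dv.card + F.card := by
          rw [Finset.sum_add_distrib, Finset.sum_add_distrib, ← Finset.mul_sum]
          have hLv : ∑ e ∈ H, (if e ∈ Lv then 1 else 0) = Lv.card := by
            rw [← Finset.card_filter, Finset.filter_mem_eq_inter, Finset.inter_eq_right.mpr
              (le_trans (Finset.filter_subset _ _) hDsub)]
          have hDvs : ∑ e ∈ H, (if e ∈ Dv then 1 else 0) = Dv.card := by
            rw [← Finset.card_filter, Finset.filter_mem_eq_inter, Finset.inter_eq_right.mpr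
              (le_trans (Finset.filter_subset _ _) hDsub)]
          have hFs : ∑ e ∈ H, (if e ∈ F then 1 else 0) = F.card := by
            rw [← Finset.card_filter, Finset.filter_mem_eq_inter, Finset.inter_eq_right.mpr
              (Finset.filter_subset _ _)]
          rw [hLv, hDvs, hFs]
  have hFsub : F ⊆ G0 := by
    intro e he
    rw [hFdef, Finset.mem_filter] at he
    rw [hG0def, Finset.mem_filter, Finset.mem_sdiff]
    exact ⟨⟨he.1, he.2.2.2⟩, he.2.2.1⟩
  have hFcard : F.card ≤ ∑ e ∈ G0, phi ends v W e := by
    have h1 : ∀ e ∈ F, 1 ≤ phi ends v W e := by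
      intro e he
      have hoW := hcov e he
      rw [hFdef, Finset.mem_filter] at he
      have hatv := he.2.1
      have hnl := he.2.2.1
      unfold phi
      unfold otherEnd at hoW
      rcases hatv with h1 | h2
      · rw [if_pos h1] at hoW ⊢
        rw [if_pos hoW]
      · have hne1 : (ends e).1 ≠ v := by rw [h2] at hnl; exact hnl
        rw [if_neg hne1] at hoW ⊢
        rw [if_pos h2, if_pos hoW]
    calc F.card = ∑ _e ∈ F, 1 := by simp
      _ ≤ ∑ e ∈ F, phi ends v W e := Finset.sum_le_sum h1
      _ ≤ ∑ e ∈ G0, phi ends v W e := Finset.sum_le_sum_of_subset hFsub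
  have hpsi_le : ∑ e ∈ D0, psi ends v W e ≤ Dv.card + 2 * Dr.card := by
    have hsplit : ∑ e ∈ D0, psi ends v W e
        = ∑ e ∈ D0.filter (fun e => (ends e).1 = v ∨ (ends e).2 = v), psi ends v W e
          + ∑ e ∈ D0.filter (fun e => ¬((ends e).1 = v ∨ (ends e).2 = v)), psi ends v W e :=
      (Finset.sum_filter_add_sum_filter_not D0 _ _).symm
    have hid1 : D0.filter (fun e => (ends e).1 = v ∨ (ends e).2 = v) = Dv := by
      rw [hD0def, hDvdef, Finset.filter_filter]
    have hid2 : D0.filter (fun e => ¬((ends e).1 = v ∨ (ends e).2 = v)) = Dr := by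
      rw [hD0def, hDrdef, Finset.filter_filter]
    have hb1 : ∑ e ∈ Dv, psi ends v W e ≤ Dv.card := by
      have hpt : ∀ e ∈ Dv, psi ends v W e ≤ 1 := by
        intro e he
        rw [hDvdef, Finset.mem_filter] at he
        have hnl := he.2.1
        have hatv := he.2.2
        unfold psi
        rcases hatv with h1 | h2
        · rw [if_pos h1]
          split_ifs <;> omega
        · have hne1 : (ends e).1 ≠ v := by rw [h2] at hnl; exact hnl
          rw [if_neg hne1, if_pos h2]
          split_ifs <;> omega
      calc ∑ e ∈ Dv, psi ends v W e ≤ ∑ _e ∈ Dv, 1 := Finset.sum_le_sum hpt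
        _ = Dv.card := by simp
    have hb2 : ∑ e ∈ Dr, psi ends v W e ≤ 2 * Dr.card := by
      have hpt : ∀ e ∈ Dr, psi ends v W e ≤ 2 := by
        intro e _
        unfold psi
        split_ifs <;> omega
      calc ∑ e ∈ Dr, psi ends v W e ≤ ∑ _e ∈ Dr, 2 := Finset.sum_le_sum hpt
        _ = 2 * Dr.card := by rw [Finset.sum_const, smul_eq_mul, mul_comm]
    rw [hsplit, hid1, hid2]
    omega
  have hparts : Lv.card + Dv.card + Dr.card ≤ k := by
    have h1 : Lv.card + Dv.card + Dr.card
        = ∑ e ∈ D, ((if (ends e).1 = v ∧ (ends e).2 = v then 1 else 0)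
          + ((if (ends e).1 ≠ (ends e).2 ∧ ((ends e).1 = v ∨ (ends e).2 = v) then 1 else 0)
          + (if (ends e).1 ≠ (ends e).2 ∧ ¬((ends e).1 = v ∨ (ends e).2 = v) then 1 else 0))) := by
      rw [hLvdef, hDvdef, hDrdef, Finset.card_filter, Finset.card_filter, Finset.card_filter,
        Finset.sum_add_distrib, Finset.sum_add_distrib]
      ring
    have h2 : ∀ e ∈ D, ((if (ends e).1 = v ∧ (ends e).2 = v then 1 else 0)
          + ((if (ends e).1 ≠ (ends e).2 ∧ ((ends e).1 = v ∨ (ends e).2 = v) then 1 else 0)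
          + (if (ends e).1 ≠ (ends e).2 ∧ ¬((ends e).1 = v ∨ (ends e).2 = v) then 1 else 0)))
          ≤ 1 := by
      intro e _
      by_cases hl : (ends e).1 = (ends e).2
      · rw [if_neg (show ¬((ends e).1 ≠ (ends e).2 ∧ ((ends e).1 = v ∨ (ends e).2 = v)) from
            fun hc => hc.1 hl),
          if_neg (show ¬((ends e).1 ≠ (ends e).2 ∧ ¬((ends e).1 = v ∨ (ends e).2 = v)) from
            fun hc => hc.1 hl)]
        split_ifs <;> omega
      · rw [if_neg (fun hc : (ends e).1 = v ∧ (ends e).2 = v => hl (hc.1.trans hc.2.symm))]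
        by_cases h2 : (ends e).1 = v ∨ (ends e).2 = v
        · rw [if_pos ⟨hl, h2⟩, if_neg (fun hc => hc.2 h2)]
        · rw [if_neg (fun hc => h2 hc.2), if_pos ⟨hl, h2⟩]
    calc Lv.card + Dv.card + Dr.card
        ≤ ∑ _e ∈ D, 1 := by rw [h1]; exact Finset.sum_le_sum h2
      _ = D.card := by simp
      _ = k := hY0card
  omega
end

section
/- Every 4k-tree-connected multigraph G with bi(G) ≥ k has k pairwise edge-disjoint spanning connected subgraphs, each with all vertex degrees even and with an odd number of edges. -/
set_option linter.unusedSectionVars false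
set_option linter.unnecessarySeqFocus false

namespace MG

variable {V E : Type} [Fintype V] [Fintype E] [DecidableEq V] [DecidableEq E]

section lemmas
variable (ends : E → V × V)

/-- indicator -/
def ind (a v : V) : ZMod 2 := if a = v then 1 else 0

lemma deg_mono {S T : Finset E} (h : S ⊆ T) (v : V) : deg ends S v ≤ deg ends T v := by
  unfold deg; exact Nat.add_le_add (Finset.card_le_card (Finset.filter_subset_filter _ h))
    (Finset.card_le_card (Finset.filter_subset_filter _ h))

lemma degZ_union {S T : Finset E} (h : Disjoint S T) (v : V) :
    ((deg ends (S ∪ T) v : ZMod 2)) = (deg ends S v : ZMod 2) + (deg ends T v : ZMod 2) := by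
  unfold deg
  rw [Finset.filter_union, Finset.filter_union,
    Finset.card_union_of_disjoint (Finset.disjoint_filter_filter h),
    Finset.card_union_of_disjoint (Finset.disjoint_filter_filter h)]
  push_cast; ring

lemma degZ_sdiff {s S : Finset E} (h : s ⊆ S) (v : V) :
    ((deg ends (S \ s) v : ZMod 2)) = (deg ends S v : ZMod 2) + (deg ends s v : ZMod 2) := by
  have h1 : (S \ s) ∪ s = S := Finset.sdiff_union_of_subset h
  have h2 : Disjoint (S \ s) s := Finset.sdiff_disjoint
  have := degZ_union ends h2 v
  rw [h1] at this
  rw [this, add_assoc, CharTwo.add_self_eq_zero, add_zero]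

lemma degZ_singleton (e : E) (v : V) :
    (deg ends {e} v : ZMod 2) = ind (ends e).1 v + ind (ends e).2 v := by
  unfold deg ind
  rw [Finset.filter_singleton, Finset.filter_singleton]
  by_cases h1 : (ends e).1 = v <;> by_cases h2 : (ends e).2 = v <;>
    simp [h1, h2] <;> rfl

end lemmas

section lemmas2
variable {V E : Type} [Fintype V] [Fintype E] [DecidableEq V] [DecidableEq E]
variable (ends : E → V × V)

lemma cardZ_symmDiff (A B : Finset E) :
    (((symmDiff A B).card : ZMod 2)) = (A.card : ZMod 2) + B.card := by
  have h1 : (symmDiff A B) = (A \ B) ∪ (B \ A) := by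
    ext x; simp [Finset.mem_symmDiff, Finset.mem_union, Finset.mem_sdiff]
  have h2 : Disjoint (A \ B) (B \ A) := by
    apply Finset.disjoint_left.2; intro x hx hy
    simp only [Finset.mem_sdiff] at hx hy; exact hy.2 hx.1
  have h3 : (A \ B).card + (A ∩ B).card = A.card := Finset.card_sdiff_add_card_inter A B
  have h4 : (B \ A).card + (B ∩ A).card = B.card := Finset.card_sdiff_add_card_inter B A
  have h5 : (A ∩ B) = (B ∩ A) := Finset.inter_comm A B
  rw [h1, Finset.card_union_of_disjoint h2]
  have h3' : ((A \ B).card : ZMod 2) + ((A ∩ B).card : ZMod 2) = (A.card : ZMod 2) := by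
    exact_mod_cast congrArg (fun n : ℕ => (n : ZMod 2)) h3
  have h4' : ((B \ A).card : ZMod 2) + ((B ∩ A).card : ZMod 2) = (B.card : ZMod 2) := by
    exact_mod_cast congrArg (fun n : ℕ => (n : ZMod 2)) h4
  push_cast
  rw [← h3', ← h4', h5]
  have : ((B ∩ A).card : ZMod 2) + ((B ∩ A).card : ZMod 2) = 0 := CharTwo.add_self_eq_zero _
  linear_combination -this

lemma filter_symmDiff' (p : E → Prop) [DecidablePred p] (A B : Finset E) :
    (symmDiff A B).filter p = symmDiff (A.filter p) (B.filter p) := by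
  ext x; simp only [Finset.mem_filter, Finset.mem_symmDiff]; tauto

lemma degZ_symmDiff (A B : Finset E) (v : V) :
    ((deg ends (symmDiff A B) v : ZMod 2)) = (deg ends A v : ZMod 2) + deg ends B v := by
  unfold deg
  rw [filter_symmDiff', filter_symmDiff']
  push_cast [cardZ_symmDiff]
  ring

lemma symmDiff_subset' {A B S : Finset E} (hA : A ⊆ S) (hB : B ⊆ S) : symmDiff A B ⊆ S := by
  intro x hx; rcases Finset.mem_symmDiff.1 hx with ⟨h,_⟩|⟨h,_⟩; exacts [hA h, hB h]

/-- handshake -/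
lemma sum_deg (S : Finset E) : ∑ v : V, deg ends S v = 2 * S.card := by
  unfold deg
  rw [Finset.sum_add_distrib]
  have h1 : S.card = ∑ v : V, (S.filter fun e => (ends e).1 = v).card :=
    Finset.card_eq_sum_card_fiberwise (fun e _ => Finset.mem_univ _)
  have h2 : S.card = ∑ v : V, (S.filter fun e => (ends e).2 = v).card :=
    Finset.card_eq_sum_card_fiberwise (fun e _ => Finset.mem_univ _)
  rw [← h1, ← h2]; ring

end lemmas2
end MG

namespace MG
section cross
variable {V E : Type} [Fintype V] [Fintype E] [DecidableEq V] [DecidableEq E]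
variable (ends : E → V × V)

lemma card_filter_fst_mem (S : Finset E) (X : Finset V) :
    (S.filter fun e => (ends e).1 ∈ X).card = ∑ v ∈ X, (S.filter fun e => (ends e).1 = v).card := by
  rw [Finset.card_eq_sum_card_fiberwise
    (f := fun e => (ends e).1) (t := X) (s := S.filter fun e => (ends e).1 ∈ X)
    (fun e he => (Finset.mem_filter.1 he).2)]
  apply Finset.sum_congr rfl
  intro v hv
  congr 1
  ext e; simp only [Finset.mem_filter]
  constructor
  · rintro ⟨⟨he, _⟩, h2⟩; exact ⟨he, h2⟩
  · rintro ⟨he, h2⟩; exact ⟨⟨he, h2 ▸ hv⟩, h2⟩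

lemma card_filter_snd_mem (S : Finset E) (X : Finset V) :
    (S.filter fun e => (ends e).2 ∈ X).card = ∑ v ∈ X, (S.filter fun e => (ends e).2 = v).card := by
  rw [Finset.card_eq_sum_card_fiberwise
    (f := fun e => (ends e).2) (t := X) (s := S.filter fun e => (ends e).2 ∈ X)
    (fun e he => (Finset.mem_filter.1 he).2)]
  apply Finset.sum_congr rfl
  intro v hv
  congr 1
  ext e; simp only [Finset.mem_filter]
  constructor
  · rintro ⟨⟨he, _⟩, h2⟩; exact ⟨he, h2⟩
  · rintro ⟨he, h2⟩; exact ⟨⟨he, h2 ▸ hv⟩, h2⟩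

lemma cutZ (S : Finset E) (X : Finset V) :
    ((cut ends S X).card : ZMod 2) = ∑ v ∈ X, (deg ends S v : ZMod 2) := by
  have hd : ∑ v ∈ X, (deg ends S v : ZMod 2)
      = ((S.filter fun e => (ends e).1 ∈ X).card : ZMod 2)
        + ((S.filter fun e => (ends e).2 ∈ X).card : ZMod 2) := by
    unfold deg
    rw [card_filter_fst_mem, card_filter_snd_mem]
    push_cast
    rw [Finset.sum_add_distrib]
  rw [hd]
  rw [Finset.card_filter, Finset.card_filter]
  unfold cut
  rw [Finset.card_filter]
  push_cast
  rw [← Finset.sum_add_distrib]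
  apply Finset.sum_congr rfl
  intro e _
  by_cases h1 : (ends e).1 ∈ X <;> by_cases h2 : (ends e).2 ∈ X <;>
    simp [h1, h2] <;> decide

lemma card_cut_add_bad (S : Finset E) (X : Finset V) :
    (cut ends S X).card + (bad ends S X).card = S.card := by
  unfold cut bad
  rw [add_comm]
  exact Finset.card_filter_add_card_filter_not _

lemma parity_principle {S : Finset E} (h : ∀ v, (deg ends S v : ZMod 2) = 0) (X : Finset V) :
    (S.card : ZMod 2) = ((bad ends S X).card : ZMod 2) := by
  have := card_cut_add_bad ends S X
  have h2 : ((cut ends S X).card : ZMod 2) = 0 := by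
    rw [cutZ]; exact Finset.sum_eq_zero fun v _ => h v
  calc (S.card : ZMod 2) = ((cut ends S X).card : ZMod 2) + ((bad ends S X).card : ZMod 2) := by
        exact_mod_cast (congrArg (fun n : ℕ => (n : ZMod 2)) this).symm
    _ = ((bad ends S X).card : ZMod 2) := by rw [h2, zero_add]

lemma link_parity {P : Finset E} {a b : V} {X : Finset V}
    (hdeg : ∀ v, (deg ends P v : ZMod 2) = ind a v + ind b v)
    (hcr : ∀ e ∈ P, ¬(((ends e).1 ∈ X) ↔ ((ends e).2 ∈ X))) :
    (P.card : ZMod 2) = (if a ∈ X then 1 else 0) + (if b ∈ X then 1 else 0) := by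
  have hc : cut ends P X = P := by
    unfold cut; exact Finset.filter_true_of_mem hcr
  have := cutZ ends P X
  rw [hc] at this
  rw [this]
  have e1 : ∀ c : V, (∑ v ∈ X, ind c v) = (if c ∈ X then (1 : ZMod 2) else 0) := by
    intro c; unfold ind; rw [Finset.sum_ite_eq]
  rw [Finset.sum_congr rfl (fun v _ => hdeg v), Finset.sum_add_distrib, e1, e1]

end cross
end MG

namespace MG
section walk
variable {V E : Type} [Fintype V] [Fintype E] [DecidableEq V] [DecidableEq E]
variable (ends : E → V × V)

lemma adjOn_symm {S : Finset E} {a b : V} (h : adjOn ends S a b) : adjOn ends S b a := by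
  obtain ⟨e, he, h1 | h2⟩ := h
  exacts [⟨e, he, Or.inr h1⟩, ⟨e, he, Or.inl h2⟩]

lemma adjOn_mono {S T : Finset E} (hST : S ⊆ T) {a b : V} (h : adjOn ends S a b) :
    adjOn ends T a b := by
  obtain ⟨e, he, h1⟩ := h; exact ⟨e, hST he, h1⟩

lemma rtg_mono {S T : Finset E} (hST : S ⊆ T) {a b : V}
    (h : Relation.ReflTransGen (adjOn ends S) a b) :
    Relation.ReflTransGen (adjOn ends T) a b :=
  Relation.ReflTransGen.mono (fun _ _ hh => adjOn_mono ends hST hh) _ _ h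

lemma rtg_symm {S : Finset E} {a b : V} (h : Relation.ReflTransGen (adjOn ends S) a b) :
    Relation.ReflTransGen (adjOn ends S) b a := by
  induction h with
  | refl => exact Relation.ReflTransGen.refl
  | tail _ hbc ih => exact Relation.ReflTransGen.head (adjOn_symm ends hbc) ih

/-- If every `x`–`b` walk in `S` uses `e`, we can reach an end of `e` from `x` and `b` from the
other end, within `S.erase e`. -/
lemma detour {S : Finset E} {e : E} {x b : V}
    (h : Relation.ReflTransGen (adjOn ends S) x b) :
    ¬ Relation.ReflTransGen (adjOn ends (S.erase e)) x b →
    (Relation.ReflTransGen (adjOn ends (S.erase e)) x (ends e).1 ∧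
      Relation.ReflTransGen (adjOn ends (S.erase e)) (ends e).2 b) ∨
    (Relation.ReflTransGen (adjOn ends (S.erase e)) x (ends e).2 ∧
      Relation.ReflTransGen (adjOn ends (S.erase e)) (ends e).1 b) := by
  induction h using Relation.ReflTransGen.head_induction_on with
  | refl => intro hn; exact absurd Relation.ReflTransGen.refl hn
  | head hadj _ ih =>
    rename_i x' y' _
    intro hn
    by_cases hy : Relation.ReflTransGen (adjOn ends (S.erase e)) y' b
    · obtain ⟨f, hf, hor⟩ := hadj
      by_cases hfe : f = e
      · subst hfe
        rcases hor with h1 | h2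
        · exact Or.inl ⟨by rw [h1], by simpa [h1] using hy⟩
        · exact Or.inr ⟨by rw [h2], by simpa [h2] using hy⟩
      · exact absurd (Relation.ReflTransGen.head
          ⟨f, Finset.mem_erase.2 ⟨hfe, hf⟩, hor⟩ hy) hn
    · have ihy := ih hy
      obtain ⟨f, hf, hor⟩ := hadj
      by_cases hfe : f = e
      · subst hfe
        exfalso
        rcases hor with h1 | h2
        · rcases ihy with ⟨h3, h4⟩ | ⟨h3, h4⟩
          · exact hy (by simpa [h1] using h4)
          · exact hn (by simpa [h1] using h4)
        · rcases ihy with ⟨h3, h4⟩ | ⟨h3, h4⟩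
          · exact hn (by simpa [h2] using h4)
          · exact hy (by simpa [h2] using h4)
      · have hxy : adjOn ends (S.erase e) x' y' := ⟨f, Finset.mem_erase.2 ⟨hfe, hf⟩, hor⟩
        rcases ihy with ⟨h3, h4⟩ | ⟨h3, h4⟩
        · exact Or.inl ⟨Relation.ReflTransGen.head hxy h3, h4⟩
        · exact Or.inr ⟨Relation.ReflTransGen.head hxy h3, h4⟩

end walk
end MG

namespace MG
section link
variable {V E : Type} [Fintype V] [Fintype E] [DecidableEq V] [DecidableEq E]
variable (ends : E → V × V)

lemma link_exists :
    ∀ (S : Finset E) {a b : V}, Relation.ReflTransGen (adjOn ends S) a b →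
    ∃ P : Finset E, P ⊆ S ∧
      (∀ v, (deg ends P v : ZMod 2) = ind a v + ind b v) ∧
      Relation.ReflTransGen (adjOn ends P) a b := by
  intro S
  induction S using Finset.strongInduction with
  | _ S IH =>
    intro a b h
    rcases Relation.ReflTransGen.cases_head h with heq | ⟨x, hax, hxb⟩
    · subst heq
      refine ⟨∅, Finset.empty_subset _, ?_, Relation.ReflTransGen.refl⟩
      intro v
      have : deg ends (∅ : Finset E) v = 0 := by unfold deg; simp
      rw [this]; push_cast; exact (CharTwo.add_self_eq_zero _).symm
    · obtain ⟨e, heS, hor⟩ := hax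
      have hss : S.erase e ⊂ S := Finset.erase_ssubset heS
      by_cases h1 : Relation.ReflTransGen (adjOn ends (S.erase e)) a b
      · obtain ⟨P, hP1, hP2, hP3⟩ := IH _ hss h1
        exact ⟨P, hP1.trans (Finset.erase_subset _ _), hP2, hP3⟩
      by_cases h2 : Relation.ReflTransGen (adjOn ends (S.erase e)) x b
      · obtain ⟨P, hP1, hP2, hP3⟩ := IH _ hss h2
        have heP : e ∉ P := fun hc => (Finset.mem_erase.1 (hP1 hc)).1 rfl
        refine ⟨insert e P, ?_, ?_, ?_⟩
        · intro f hf
          rcases Finset.mem_insert.1 hf with rfl | hfP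
          · exact heS
          · exact (Finset.erase_subset _ _) (hP1 hfP)
        · intro v
          have hins : insert e P = {e} ∪ P := by
            ext y; simp [Finset.mem_insert, Finset.mem_union]
          have hdisj : Disjoint ({e} : Finset E) P := by
            simp [Finset.disjoint_left, heP]
          rw [hins, degZ_union ends hdisj, degZ_singleton, hP2 v]
          have hends : ind (ends e).1 v + ind (ends e).2 v = ind a v + ind x v := by
            rcases hor with h3 | h3
            · rw [h3]
            · rw [h3]; exact add_comm _ _
          rw [hends]
          unfold ind
          have : (if x = v then (1 : ZMod 2) else 0) + (if x = v then (1 : ZMod 2) else 0) = 0 := by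
            by_cases hx : x = v <;> simp [hx] <;> decide
          linear_combination this
        · have hax' : adjOn ends (insert e P) a x := ⟨e, Finset.mem_insert_self _ _, hor⟩
          exact Relation.ReflTransGen.head hax'
            (rtg_mono ends (fun f hf => Finset.mem_insert_of_mem hf) hP3)
      · exfalso
        rcases detour ends hxb h2 with ⟨h3, h4⟩ | ⟨h3, h4⟩
        · rcases hor with h5 | h5
          · exact h2 (by simpa [h5] using h4)
          · exact h1 (by simpa [h5] using h4)
        · rcases hor with h5 | h5
          · exact h1 (by simpa [h5] using h4)
          · exact h2 (by simpa [h5] using h4)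

end link
end MG

namespace MG
section bip
variable {V E : Type} [Fintype V] [Fintype E] [DecidableEq V] [DecidableEq E]
variable (ends : E → V × V)

lemma evenZ {n : ℕ} : (n : ZMod 2) = 0 ↔ Even n := by
  rw [ZMod.natCast_eq_zero_iff]; exact ⟨fun h => (Nat.even_iff.2 (Nat.mod_eq_zero_of_dvd h)), fun h => Nat.dvd_of_mod_eq_zero (Nat.even_iff.1 h)⟩

lemma oddZ {n : ℕ} : (n : ZMod 2) = 1 ↔ Odd n := by
  rw [← Nat.not_even_iff_odd, ← evenZ]
  constructor
  · intro h hc; rw [h] at hc; exact one_ne_zero hc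
  · intro h
    have : ∀ x : ZMod 2, x = 0 ∨ x = 1 := by decide
    rcases this (n : ZMod 2) with h0 | h1
    · exact absurd h0 h
    · exact h1


lemma bip_of_no_odd (A : Finset E)
    (hz : ∀ z, z ⊆ A → (∀ v, (deg ends z v : ZMod 2) = 0) → ¬ Odd z.card) :
    ∃ X : Finset V, ∀ e ∈ A, ¬(((ends e).1 ∈ X) ↔ ((ends e).2 ∈ X)) := by
  classical
  let s : Setoid V := ⟨fun a b => Relation.ReflTransGen (adjOn ends A) a b,
    ⟨fun _ => Relation.ReflTransGen.refl, fun h => rtg_symm ends h,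
      fun h1 h2 => Relation.ReflTransGen.trans h1 h2⟩⟩
  have hout : ∀ v : V, Relation.ReflTransGen (adjOn ends A) (Quotient.mk s v).out v :=
    fun v => Quotient.mk_out (s := s) v
  let P : V → Finset E := fun v => (link_exists ends A (hout v)).choose
  have hP : ∀ v : V, P v ⊆ A ∧
      (∀ w, (deg ends (P v) w : ZMod 2) = ind (Quotient.mk s v).out w + ind v w) ∧
      Relation.ReflTransGen (adjOn ends (P v)) (Quotient.mk s v).out v :=
    fun v => (link_exists ends A (hout v)).choose_spec
  refine ⟨Finset.univ.filter (fun v => ((P v).card : ZMod 2) = 1), ?_⟩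
  intro e he
  set u := (ends e).1 with hu
  set w := (ends e).2 with hw
  by_cases huw : u = w
  · -- loop
    exfalso
    refine hz {e} (Finset.singleton_subset_iff.2 he) ?_ (by simp)
    intro v
    rw [degZ_singleton, ← hu, ← hw, ← huw, CharTwo.add_self_eq_zero]
  · have hadj : adjOn ends A u w := ⟨e, he, Or.inl (by rw [hu, hw])⟩
    have hmk : (Quotient.mk s u) = (Quotient.mk s w) :=
      Quotient.sound (Relation.ReflTransGen.single hadj)
    have houteq : (Quotient.mk s u).out = (Quotient.mk s w).out := by rw [hmk]
    -- the even closed vector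
    set z : Finset E := symmDiff (symmDiff (P u) (P w)) {e} with hzdef
    have hzsub : z ⊆ A := by
      apply symmDiff_subset' (symmDiff_subset' (hP u).1 (hP w).1)
      exact Finset.singleton_subset_iff.2 he
    have hzdeg : ∀ v, (deg ends z v : ZMod 2) = 0 := by
      intro v
      rw [hzdef, degZ_symmDiff, degZ_symmDiff, degZ_singleton, ← hu, ← hw,
        (hP u).2.1 v, (hP w).2.1 v, houteq]
      ring_nf
      rw [show ∀ x : ZMod 2, x * 2 = 0 from by decide,
        show ∀ x : ZMod 2, x * 2 = 0 from by decide,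
        show ∀ x : ZMod 2, x * 2 = 0 from by decide]
      ring
    have hzcard : ((z.card : ZMod 2)) = ((P u).card : ZMod 2) + ((P w).card : ZMod 2) + 1 := by
      rw [hzdef, cardZ_symmDiff, cardZ_symmDiff]; simp
    have heven : ¬ Odd z.card := hz z hzsub hzdeg
    have hz0 : ((z.card : ZMod 2)) = 0 := by
      rw [evenZ]; exact Nat.not_odd_iff_even.1 heven
    rw [hzcard] at hz0
    -- memberships
    simp only [Finset.mem_filter, Finset.mem_univ, true_and]
    intro hiff
    have hcases : ∀ x y : ZMod 2, x + y + 1 = 0 → (x = 1 ↔ y = 1) → False := by decide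
    exact hcases _ _ hz0 hiff

end bip
end MG

namespace MG
section join
variable {V E : Type} [Fintype V] [Fintype E] [DecidableEq V] [DecidableEq E]
variable (ends : E → V × V)

lemma const_conn {W : Finset E} (hconn : ConnOn ends W) (c : V → ZMod 2)
    (hc : ∀ e ∈ W, c (ends e).1 = c (ends e).2) (a b : V) : c a = c b := by
  have hstep : ∀ x y : V, adjOn ends W x y → c x = c y := by
    rintro x y ⟨e, he, h1 | h2⟩
    · have := hc e he; rw [h1] at this; exact this
    · have := hc e he; rw [h2] at this; exact this.symm
  induction hconn a b with
  | refl => rfl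
  | tail _ h2 ih => exact ih.trans (hstep _ _ h2)

lemma join_exists {W : Finset E} (hconn : ConnOn ends W) :
    ∀ t : V → ZMod 2, (∑ v : V, t v) = 0 →
      ∃ J, J ⊆ W ∧ ∀ v, (deg ends J v : ZMod 2) = t v := by
  classical
  have key : ∀ n : ℕ, ∀ t : V → ZMod 2, (Finset.univ.filter (fun v => t v = 1)).card = n →
      (∑ v : V, t v) = 0 → ∃ J, J ⊆ W ∧ ∀ v, (deg ends J v : ZMod 2) = t v := by
    intro n
    induction n using Nat.strong_induction_on with
    | _ n IH =>
      intro t hcard hsum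
      by_cases hn : (Finset.univ.filter (fun v => t v = 1)).card = 0
      · refine ⟨∅, Finset.empty_subset _, ?_⟩
        intro v
        have hv : t v = 0 := by
          have hnot : v ∉ Finset.univ.filter (fun v => t v = 1) := by
            rw [Finset.card_eq_zero.1 hn]; exact Finset.notMem_empty _
          simp only [Finset.mem_filter, Finset.mem_univ, true_and] at hnot
          rcases (by decide : ∀ x : ZMod 2, x = 0 ∨ x = 1) (t v) with h | h
          · exact h
          · exact absurd h hnot
        rw [hv]; unfold deg; simp
      · -- pick a with t a = 1
        have hne : (Finset.univ.filter (fun v => t v = 1)).Nonempty :=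
          Finset.card_pos.1 (Nat.pos_of_ne_zero hn)
        obtain ⟨a, ha⟩ := hne
        have hta : t a = 1 := (Finset.mem_filter.1 ha).2
        -- sum = card of filter mod 2
        have hsum_card : (∑ v : V, t v) = (((Finset.univ.filter (fun v => t v = 1)).card : ℕ) : ZMod 2) := by
          rw [Finset.card_filter]
          push_cast
          apply Finset.sum_congr rfl
          intro v _
          rcases (by decide : ∀ x : ZMod 2, x = 0 ∨ x = 1) (t v) with h | h <;> simp [h]
        have hcard2 : (((Finset.univ.filter (fun v => t v = 1)).card : ℕ) : ZMod 2) = 0 := by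
          rw [← hsum_card]; exact hsum
        have hb : ∃ b ∈ Finset.univ.filter (fun v => t v = 1), b ≠ a := by
          by_contra hcon
          push_neg at hcon
          have : Finset.univ.filter (fun v => t v = 1) = {a} := by
            apply Finset.eq_singleton_iff_unique_mem.2 ⟨ha, fun x hx => hcon x hx⟩
          rw [this, Finset.card_singleton] at hcard2
          rw [Nat.cast_one] at hcard2
          exact one_ne_zero hcard2
        obtain ⟨b, hbmem, hba⟩ := hb
        have htb : t b = 1 := (Finset.mem_filter.1 hbmem).2
        obtain ⟨Pab, hPsub, hPdeg, _⟩ := link_exists ends W (hconn a b)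
        let t' : V → ZMod 2 := fun v => t v + ind a v + ind b v
        have ht'v : ∀ v, t' v = t v + ind a v + ind b v := fun _ => rfl
        have hfilt : Finset.univ.filter (fun v => t' v = 1)
            = (Finset.univ.filter (fun v => t v = 1)) \ {a, b} := by
          ext v
          simp only [Finset.mem_filter, Finset.mem_univ, true_and, Finset.mem_sdiff,
            Finset.mem_insert, Finset.mem_singleton]
          by_cases hva : v = a
          · have e_a : ind a v = 1 := by unfold ind; rw [if_pos hva.symm]
            have e_b : ind b v = 0 := by
              unfold ind; rw [if_neg (fun hc => hba (hc.trans hva))]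
            have h1 : t' v = t v + 1 := by rw [ht'v v, e_a, e_b]; ring
            have h2 : t v = 1 := by rw [hva]; exact hta
            rw [h1, h2]
            constructor
            · intro hc; exact absurd hc (by decide)
            · rintro ⟨-, hc⟩; exact absurd (Or.inl hva) hc
          · by_cases hvb : v = b
            · have e_b : ind b v = 1 := by unfold ind; rw [if_pos hvb.symm]
              have e_a : ind a v = 0 := by
                unfold ind; rw [if_neg (fun hc => hba (hc.trans hvb).symm)]
              have h1 : t' v = t v + 1 := by rw [ht'v v, e_a, e_b]; ring
              have h2 : t v = 1 := by rw [hvb]; exact htb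
              rw [h1, h2]
              constructor
              · intro hc; exact absurd hc (by decide)
              · rintro ⟨-, hc⟩; exact absurd (Or.inr hvb) hc
            · have e_a : ind a v = 0 := by unfold ind; rw [if_neg (fun hc => hva hc.symm)]
              have e_b : ind b v = 0 := by unfold ind; rw [if_neg (fun hc => hvb hc.symm)]
              have h1 : t' v = t v := by rw [ht'v v, e_a, e_b]; ring
              rw [h1]
              constructor
              · intro h; exact ⟨h, by rintro (rfl | rfl); exacts [hva rfl, hvb rfl]⟩
              · rintro ⟨h, -⟩; exact h
        have habsub : ({a, b} : Finset V) ⊆ Finset.univ.filter (fun v => t v = 1) := by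
          intro x hx
          rcases Finset.mem_insert.1 hx with rfl | hx
          · exact ha
          · rw [Finset.mem_singleton.1 hx]; exact hbmem
        have hcard' : (Finset.univ.filter (fun v => t' v = 1)).card = n - 2 := by
          rw [hfilt, Finset.card_sdiff_of_subset habsub, hcard]
          congr 1
          rw [Finset.card_insert_of_notMem (by simp [hba.symm]), Finset.card_singleton]
        have hn2 : 2 ≤ n := by
          rw [← hcard]
          calc 2 = ({a, b} : Finset V).card := by
                rw [Finset.card_insert_of_notMem (by simp [hba.symm]), Finset.card_singleton]
            _ ≤ _ := Finset.card_le_card habsub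
        have hsum' : (∑ v : V, t' v) = 0 := by
          rw [Finset.sum_congr rfl (fun v _ => ht'v v)]
          rw [Finset.sum_add_distrib, Finset.sum_add_distrib, hsum]
          have e1 : ∀ c : V, (∑ v : V, ind c v) = 1 := by
            intro c; unfold ind; rw [Finset.sum_ite_eq]; simp
          rw [e1, e1]; decide
        obtain ⟨J', hJ'sub, hJ'deg⟩ := IH (n - 2) (by omega) t' hcard' hsum'
        refine ⟨symmDiff J' Pab, symmDiff_subset' hJ'sub hPsub, ?_⟩
        intro v
        rw [degZ_symmDiff, hJ'deg v, hPdeg v, ht'v v]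
        ring_nf
        rw [show ∀ x : ZMod 2, x * 2 = 0 from by decide,
          show ∀ x : ZMod 2, x * 2 = 0 from by decide]
        ring
  intro t hsum
  exact key _ t rfl hsum

end join
end MG

namespace MG
section constr
variable {V E : Type} [Fintype V] [Fintype E] [DecidableEq V] [DecidableEq E]
variable (ends : E → V × V)

lemma connOn_mono {S T : Finset E} (h : S ⊆ T) (hS : ConnOn ends S) : ConnOn ends T :=
  fun a b => rtg_mono ends h (hS a b)

lemma conn_replace {H H' : Finset E} (hconn : ConnOn ends H)
    (hrepl : ∀ e ∈ H, e ∈ H' ∨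
      Relation.ReflTransGen (adjOn ends H') (ends e).1 (ends e).2) :
    ConnOn ends H' := by
  intro a b
  have hstep : ∀ x y : V, adjOn ends H x y → Relation.ReflTransGen (adjOn ends H') x y := by
    rintro x y ⟨e, he, h1 | h2⟩
    · rcases hrepl e he with h3 | h3
      · exact Relation.ReflTransGen.single ⟨e, h3, Or.inl h1⟩
      · rw [h1] at h3; exact h3
    · rcases hrepl e he with h3 | h3
      · exact Relation.ReflTransGen.single ⟨e, h3, Or.inr h2⟩
      · rw [h2] at h3; exact rtg_symm ends h3
  induction hconn a b with
  | refl => exact Relation.ReflTransGen.refl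
  | tail _ h2 ih => exact ih.trans (hstep _ _ h2)

lemma sum_degZ_zero (S : Finset E) : (∑ v : V, (deg ends S v : ZMod 2)) = 0 := by
  have := sum_deg ends S
  have h2 : ((∑ v : V, deg ends S v : ℕ) : ZMod 2) = ((2 * S.card : ℕ) : ZMod 2) := by
    exact_mod_cast congrArg (fun n : ℕ => (n : ZMod 2)) this
  push_cast at h2
  rw [h2, show ((2 : ZMod 2)) = 0 from by decide, zero_mul]

lemma constr {W1 W2 z : Finset E} (h12 : Disjoint W1 W2) (hz1 : Disjoint z W1)
    (hW1 : ConnOn ends W1) (hW2 : ConnOn ends W2)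
    (hzdeg : ∀ v, (deg ends z v : ZMod 2) = 0) (hzodd : Odd z.card) :
    ∃ H, H ⊆ W1 ∪ W2 ∪ z ∧ ConnOn ends H ∧
      (∀ v, (deg ends H v : ZMod 2) = 0) ∧ Odd H.card := by
  set t : V → ZMod 2 := fun v => (deg ends W1 v : ZMod 2) with ht
  obtain ⟨J, hJsub, hJdeg⟩ := join_exists ends hW2 t (sum_degZ_zero ends W1)
  have hJW1 : Disjoint W1 J := Finset.disjoint_of_subset_right hJsub h12
  by_cases hodd : Odd (W1 ∪ J).card
  · refine ⟨W1 ∪ J, ?_, ?_, ?_, hodd⟩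
    · intro e he
      rcases Finset.mem_union.1 he with h | h
      · exact Finset.mem_union_left _ (Finset.mem_union_left _ h)
      · exact Finset.mem_union_left _ (Finset.mem_union_right _ (hJsub h))
    · exact connOn_mono ends Finset.subset_union_left hW1
    · intro v
      rw [degZ_union ends hJW1, hJdeg v, ht]
      exact CharTwo.add_self_eq_zero _
  · set z' := symmDiff J z with hz'
    have hz'W1 : Disjoint W1 z' := by
      rw [Finset.disjoint_right]
      intro e he hc
      rcases Finset.mem_symmDiff.1 he with ⟨h, _⟩ | ⟨h, _⟩
      · exact Finset.disjoint_left.1 hJW1 hc h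
      · exact Finset.disjoint_left.1 hz1 h hc
    refine ⟨W1 ∪ z', ?_, ?_, ?_, ?_⟩
    · intro e he
      rcases Finset.mem_union.1 he with h | h
      · exact Finset.mem_union_left _ (Finset.mem_union_left _ h)
      · rcases Finset.mem_symmDiff.1 h with ⟨h1, _⟩ | ⟨h1, _⟩
        · exact Finset.mem_union_left _ (Finset.mem_union_right _ (hJsub h1))
        · exact Finset.mem_union_right _ h1
    · exact connOn_mono ends Finset.subset_union_left hW1
    · intro v
      rw [degZ_union ends hz'W1, hz', degZ_symmDiff, hJdeg v, hzdeg v, ht]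
      ring_nf
      rw [show ((deg ends W1 v : ZMod 2)) * 2 = 0 from by
        rw [mul_two]; exact CharTwo.add_self_eq_zero _]
    · rw [← oddZ]
      rw [Finset.card_union_of_disjoint hz'W1]
      push_cast
      rw [hz', cardZ_symmDiff]
      have hnotodd : ((W1.card : ZMod 2) + (J.card : ZMod 2)) = 0 := by
        have := Finset.card_union_of_disjoint hJW1
        have h2 : ¬ Odd ((W1 ∪ J).card) := hodd
        rw [Nat.not_odd_iff_even, ← evenZ, this] at h2
        push_cast at h2
        exact h2
      have hzo : ((z.card : ZMod 2)) = 1 := oddZ.2 hzodd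
      rw [← add_assoc, hnotodd, zero_add, hzo]

end constr
end MG

namespace MG
section fam
variable {E : Type} [DecidableEq E]

lemma fam_extend {i : ℕ} (Q : Finset E → Prop) (Hs : Fin i → Finset E) (H : Finset E)
    (hdisj : ∀ a b, a ≠ b → Disjoint (Hs a) (Hs b))
    (hgood : ∀ a, Q (Hs a)) (hQ : Q H) (hHd : ∀ a, Disjoint H (Hs a)) :
    ∃ Hs' : Fin (i+1) → Finset E,
      (∀ a b, a ≠ b → Disjoint (Hs' a) (Hs' b)) ∧ (∀ a, Q (Hs' a)) ∧
      (∀ j, Hs' j = H ∨ ∃ c, Hs' j = Hs c) := by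
  refine ⟨fun j => if h : (j : ℕ) < i then Hs ⟨j, h⟩ else H, ?_, ?_, ?_⟩
  · intro a b hab
    by_cases ha : (a : ℕ) < i <;> by_cases hb : (b : ℕ) < i
    · simp only [dif_pos ha, dif_pos hb]
      refine hdisj _ _ ?_
      intro hc
      exact hab (Fin.ext (by simpa using congrArg (Fin.val) hc))
    · simp only [dif_pos ha, dif_neg hb]
      exact (hHd _).symm
    · simp only [dif_neg ha, dif_pos hb]
      exact hHd _
    · exfalso
      have h1 : (a : ℕ) = i := by omega
      have h2 : (b : ℕ) = i := by omega
      exact hab (Fin.ext (h1.trans h2.symm))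
  · intro a
    by_cases ha : (a : ℕ) < i
    · simpa only [dif_pos ha] using hgood _
    · simpa only [dif_neg ha] using hQ
  · intro j
    by_cases hj : (j : ℕ) < i
    · exact Or.inr ⟨⟨j, hj⟩, by simp [dif_pos hj]⟩
    · exact Or.inl (by simp [dif_neg hj])

lemma fam_replace_extend {i : ℕ} (Q : Finset E → Prop) (Hs : Fin i → Finset E) (a : Fin i)
    (Hb Ha : Finset E)
    (hdisj : ∀ c d, c ≠ d → Disjoint (Hs c) (Hs d))
    (hgood : ∀ c, c ≠ a → Q (Hs c)) (hQa : Q Ha) (hQb : Q Hb)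
    (hab : Disjoint Ha Hb)
    (haold : ∀ c, c ≠ a → Disjoint Ha (Hs c))
    (hbold : ∀ c, c ≠ a → Disjoint Hb (Hs c)) :
    ∃ Hs' : Fin (i+1) → Finset E,
      (∀ c d, c ≠ d → Disjoint (Hs' c) (Hs' d)) ∧ (∀ c, Q (Hs' c)) ∧
      (∀ j, Hs' j = Ha ∨ Hs' j = Hb ∨ ∃ c, c ≠ a ∧ Hs' j = Hs c) := by
  refine ⟨fun j => if h : (j : ℕ) < i then (if (⟨j, h⟩ : Fin i) = a then Hb else Hs ⟨j, h⟩)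
    else Ha, ?_, ?_, ?_⟩
  · intro c d hcd
    by_cases hc : (c : ℕ) < i <;> by_cases hd : (d : ℕ) < i
    · simp only [dif_pos hc, dif_pos hd]
      have hne : (⟨(c : ℕ), hc⟩ : Fin i) ≠ ⟨(d : ℕ), hd⟩ := by
        intro h; exact hcd (Fin.ext (by simpa using congrArg (Fin.val) h))
      by_cases h1 : (⟨(c : ℕ), hc⟩ : Fin i) = a <;> by_cases h2 : (⟨(d : ℕ), hd⟩ : Fin i) = a
      · exact absurd (h1.trans h2.symm) hne
      · rw [if_pos h1, if_neg h2]
        exact hbold _ h2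
      · rw [if_neg h1, if_pos h2]
        exact (hbold _ h1).symm
      · rw [if_neg h1, if_neg h2]
        exact hdisj _ _ hne
    · simp only [dif_pos hc, dif_neg hd]
      by_cases h1 : (⟨(c : ℕ), hc⟩ : Fin i) = a
      · rw [if_pos h1]; exact hab.symm
      · rw [if_neg h1]; exact (haold _ h1).symm
    · simp only [dif_neg hc, dif_pos hd]
      by_cases h2 : (⟨(d : ℕ), hd⟩ : Fin i) = a
      · rw [if_pos h2]; exact hab
      · rw [if_neg h2]; exact haold _ h2
    · exfalso
      have h1 : (c : ℕ) = i := by omega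
      have h2 : (d : ℕ) = i := by omega
      exact hcd (Fin.ext (h1.trans h2.symm))
  · intro c
    by_cases hc : (c : ℕ) < i
    · simp only [dif_pos hc]
      by_cases h1 : (⟨(c : ℕ), hc⟩ : Fin i) = a
      · rw [if_pos h1]; exact hQb
      · rw [if_neg h1]; exact hgood _ h1
    · simp only [dif_neg hc]; exact hQa
  · intro j
    by_cases hj : (j : ℕ) < i
    · by_cases h1 : (⟨(j : ℕ), hj⟩ : Fin i) = a
      · exact Or.inr (Or.inl (by simp [dif_pos hj, if_pos h1]))
      · exact Or.inr (Or.inr ⟨⟨j, hj⟩, h1, by simp [dif_pos hj, if_neg h1]⟩)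
    · exact Or.inl (by simp [dif_neg hj])

end fam
end MG

namespace MG
section flip
variable {V E : Type} [Fintype V] [Fintype E] [DecidableEq V] [DecidableEq E]
variable (ends : E → V × V)

lemma degZ_insert {P : Finset E} {e : E} (he : e ∉ P) (v : V) :
    (deg ends (insert e P) v : ZMod 2) = ind (ends e).1 v + ind (ends e).2 v
      + (deg ends P v : ZMod 2) := by
  have h1 : insert e P = {e} ∪ P := by ext x; simp [Finset.mem_insert, Finset.mem_union]
  have h2 : Disjoint ({e} : Finset E) P := by simp [Finset.disjoint_left, he]
  rw [h1, degZ_union ends h2, degZ_singleton]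

lemma flip_z {XP : Finset V} {W2 : Finset E} (hW2conn : ConnOn ends W2)
    (hW2cross : ∀ e ∈ W2, ¬(((ends e).1 ∈ XP) ↔ ((ends e).2 ∈ XP)))
    {g : E} (hg : ((ends g).1 ∈ XP) ↔ ((ends g).2 ∈ XP)) (hgW2 : g ∉ W2) :
    ∃ z, z ⊆ insert g W2 ∧ (∀ v, (deg ends z v : ZMod 2) = 0) ∧ Odd z.card := by
  obtain ⟨P0, hP0sub, hP0deg, _⟩ :=
    link_exists ends W2 (hW2conn (ends g).1 (ends g).2)
  have hgP0 : g ∉ P0 := fun hc => hgW2 (hP0sub hc)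
  refine ⟨insert g P0, ?_, ?_, ?_⟩
  · intro x hx
    rcases Finset.mem_insert.1 hx with rfl | hx
    · exact Finset.mem_insert_self _ _
    · exact Finset.mem_insert_of_mem (hP0sub hx)
  · intro v
    rw [degZ_insert ends hgP0, hP0deg v]
    ring_nf
    rw [show ∀ x : ZMod 2, x * 2 = 0 from by decide,
      show ∀ x : ZMod 2, x * 2 = 0 from by decide]
    ring
  · rw [← oddZ, Finset.card_insert_of_notMem hgP0]
    push_cast
    rw [link_parity ends hP0deg (fun e he => hW2cross e (hP0sub he))]
    by_cases h1 : (ends g).1 ∈ XP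
    · rw [if_pos h1, if_pos (hg.1 h1)]; decide
    · rw [if_neg h1, if_neg (fun hc => h1 (hg.2 hc))]; decide

end flip
end MG

open MG Finset

theorem stmt13' {V E : Type} [Fintype V] [Fintype E] [DecidableEq V] [DecidableEq E]
    (ends : E → V × V) (k : ℕ)
    (htc : TreeConnOn ends (4 * k) Finset.univ)
    (hbi : k ≤ biIndexOn ends Finset.univ) :
    ∃ G : Fin k → Finset E,
      (∀ i j, i ≠ j → Disjoint (G i) (G j)) ∧
      ∀ i, ConnOn ends (G i) ∧ (∀ v : V, Even (deg ends (G i) v)) ∧ Odd (G i).card := by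
  classical
  obtain ⟨T, hT, hTdisj⟩ := htc
  have hTconn : ∀ m, ConnOn ends (T m) := fun m => (hT m).2.1
  have hbad : ∀ X : Finset V, k ≤ (bad ends Finset.univ X).card := by
    intro X
    unfold biIndexOn at hbi
    exact le_trans hbi (Finset.inf'_le _ (Finset.mem_univ X))
  set Q : Finset E → Prop :=
    fun S => ConnOn ends S ∧ (∀ v, (deg ends S v : ZMod 2) = 0) ∧ Odd S.card with hQdef
  have main : ∀ i, i ≤ k → ∃ (Hs : Fin i → Finset E) (TT : Finset (Fin (4*k))),
      (∀ a b, a ≠ b → Disjoint (Hs a) (Hs b)) ∧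
      (∀ a, Q (Hs a)) ∧
      4 * (k - i) ≤ TT.card ∧
      (∀ m ∈ TT, ∀ a, Disjoint (T m) (Hs a)) := by
    intro i
    induction i with
    | zero =>
      intro _
      refine ⟨fun a => a.elim0, Finset.univ, ?_, ?_, ?_, ?_⟩
      · intro a; exact a.elim0
      · intro a; exact a.elim0
      · have : (Finset.univ : Finset (Fin (4*k))).card = 4 * k := by
          rw [Finset.card_univ, Fintype.card_fin]
        rw [this]; omega
      · intro m _ a; exact a.elim0
    | succ i IH =>
      intro hik
      have hik' : i < k := hik
      obtain ⟨Hs, TT, hdisj, hgood, hcard, htree⟩ := IH (by omega)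
      -- pick four distinct trees
      have h4 : 4 ≤ TT.card := by omega
      obtain ⟨m1, hm1⟩ := Finset.card_pos.1 (by omega : 0 < TT.card)
      have hc1 : 3 ≤ (TT.erase m1).card := by
        have := Finset.card_erase_of_mem hm1; omega
      obtain ⟨m2, hm2⟩ := Finset.card_pos.1 (by omega : 0 < (TT.erase m1).card)
      have hc2 : 2 ≤ ((TT.erase m1).erase m2).card := by
        have := Finset.card_erase_of_mem hm2; omega
      obtain ⟨m3, hm3⟩ := Finset.card_pos.1 (by omega : 0 < ((TT.erase m1).erase m2).card)
      have hc3 : 1 ≤ (((TT.erase m1).erase m2).erase m3).card := by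
        have := Finset.card_erase_of_mem hm3; omega
      obtain ⟨m4, hm4⟩ := Finset.card_pos.1
        (by omega : 0 < (((TT.erase m1).erase m2).erase m3).card)
      have hm2' : m2 ∈ TT := Finset.mem_of_mem_erase hm2
      have hm3' : m3 ∈ TT := Finset.mem_of_mem_erase (Finset.mem_of_mem_erase hm3)
      have hm4' : m4 ∈ TT :=
        Finset.mem_of_mem_erase (Finset.mem_of_mem_erase (Finset.mem_of_mem_erase hm4))
      have hne21 : m2 ≠ m1 := Finset.ne_of_mem_erase hm2
      have hne31 : m3 ≠ m1 := Finset.ne_of_mem_erase (Finset.mem_of_mem_erase hm3)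
      have hne32 : m3 ≠ m2 := Finset.ne_of_mem_erase hm3
      have hne41 : m4 ≠ m1 :=
        Finset.ne_of_mem_erase (Finset.mem_of_mem_erase (Finset.mem_of_mem_erase hm4))
      have hne42 : m4 ≠ m2 :=
        Finset.ne_of_mem_erase (Finset.mem_of_mem_erase hm4)
      have hne43 : m4 ≠ m3 := Finset.ne_of_mem_erase hm4
      set M4 : Finset (Fin (4*k)) := {m1, m2, m3, m4} with hM4
      set HU : Finset E := Finset.univ.biUnion (fun a : Fin i => Hs a) with hHU
      set OT : Finset E := (TT \ M4).biUnion (fun m => T m) with hOT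
      set P : Finset E := (Finset.univ \ HU) \ OT with hP
      have hPHs : ∀ a, Disjoint P (Hs a) := by
        intro a
        rw [Finset.disjoint_left]
        intro e heP heHs
        have : e ∈ HU := Finset.mem_biUnion.2 ⟨a, Finset.mem_univ a, heHs⟩
        rw [hP] at heP
        exact (Finset.mem_sdiff.1 (Finset.mem_sdiff.1 heP).1).2 this
      have hsubP : ∀ m, m ∈ TT → m ∈ M4 → T m ⊆ P := by
        intro m hm hmM e he
        rw [hP]
        refine Finset.mem_sdiff.2 ⟨Finset.mem_sdiff.2 ⟨Finset.mem_univ e, ?_⟩, ?_⟩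
        · intro hc
          obtain ⟨a, _, hea⟩ := Finset.mem_biUnion.1 hc
          exact Finset.disjoint_left.1 (htree m hm a) he hea
        · intro hc
          obtain ⟨m', hm', hem'⟩ := Finset.mem_biUnion.1 hc
          have hmm' : m' ≠ m := by
            intro hcc
            exact (Finset.mem_sdiff.1 hm').2 (hcc ▸ hmM)
          exact Finset.disjoint_left.1 (hTdisj m m' (Ne.symm hmm')) he hem'
      have hW1P : T m1 ⊆ P := hsubP m1 hm1 (by simp [hM4])
      have hW2P : T m2 ⊆ P := hsubP m2 hm2' (by simp [hM4])
      have hW3P : T m3 ⊆ P := hsubP m3 hm3' (by simp [hM4])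
      have hW4P : T m4 ⊆ P := hsubP m4 hm4' (by simp [hM4])
      have hM4card : M4.card ≤ 4 := by
        rw [hM4]
        have h1 := Finset.card_insert_le m1 ({m2, m3, m4} : Finset (Fin (4*k)))
        have h2 := Finset.card_insert_le m2 ({m3, m4} : Finset (Fin (4*k)))
        have h3 := Finset.card_insert_le m3 ({m4} : Finset (Fin (4*k)))
        have h4 : ({m4} : Finset (Fin (4*k))).card = 1 := Finset.card_singleton _
        omega
      have hTTM4 : 4 * (k - (i+1)) ≤ (TT \ M4).card := by
        have h1 : (TT \ M4).card + (TT ∩ M4).card = TT.card :=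
          Finset.card_sdiff_add_card_inter TT M4
        have h2 : (TT ∩ M4).card ≤ M4.card :=
          Finset.card_le_card (Finset.inter_subset_right)
        omega
      have hPOT : ∀ m ∈ TT \ M4, ∀ (H : Finset E), H ⊆ P → Disjoint (T m) H := by
        intro m hm H hHP
        rw [Finset.disjoint_left]
        intro e he heH
        have h1 : e ∈ OT := Finset.mem_biUnion.2 ⟨m, hm, he⟩
        exact (Finset.mem_sdiff.1 (hHP heH)).2 h1
      have hfinishA : ∀ (H : Finset E) (R : Finset (Fin (4*k))), Q H →
          (∀ a, Disjoint H (Hs a)) →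
          R ⊆ TT → 4 * (k - (i+1)) ≤ R.card → (∀ m ∈ R, Disjoint (T m) H) →
          ∃ (Hs' : Fin (i+1) → Finset E) (TT' : Finset (Fin (4*k))),
            (∀ a b, a ≠ b → Disjoint (Hs' a) (Hs' b)) ∧
            (∀ a, Q (Hs' a)) ∧
            4 * (k - (i+1)) ≤ TT'.card ∧
            (∀ m ∈ TT', ∀ a, Disjoint (T m) (Hs' a)) := by
        intro H R hQH hHd hRsub hRcard hRH
        obtain ⟨Hs', h1, h2, h3⟩ := fam_extend Q Hs H hdisj hgood hQH hHd
        refine ⟨Hs', R, h1, h2, hRcard, ?_⟩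
        intro m hm j
        rcases h3 j with he | ⟨c, hc⟩
        · rw [he]; exact hRH m hm
        · rw [hc]; exact htree m (hRsub hm) c
      by_cases hodd1 : ∃ z, z ⊆ P \ T m1 ∧ (∀ v, (deg ends z v : ZMod 2) = 0) ∧ Odd z.card
      · obtain ⟨z, hzsub, hzdeg, hzodd⟩ := hodd1
        have hz1 : Disjoint z (T m1) := by
          rw [Finset.disjoint_left]
          intro e he hc
          exact (Finset.mem_sdiff.1 (hzsub he)).2 hc
        obtain ⟨H, hHsub, hHconn, hHdeg, hHodd⟩ :=
          constr ends (hTdisj m1 m2 (Ne.symm hne21)) hz1 (hTconn m1) (hTconn m2) hzdeg hzodd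
        have hHP : H ⊆ P := by
          intro e he
          rcases Finset.mem_union.1 (hHsub he) with h | h
          · rcases Finset.mem_union.1 h with h' | h'
            · exact hW1P h'
            · exact hW2P h'
          · exact (Finset.sdiff_subset) (hzsub h)
        exact hfinishA H (TT \ M4) ⟨hHconn, hHdeg, hHodd⟩
          (fun a => Finset.disjoint_of_subset_left hHP (hPHs a))
          (Finset.sdiff_subset) hTTM4 (fun m hm => hPOT m hm H hHP)
      by_cases hodd2 : ∃ z, z ⊆ P \ T m2 ∧ (∀ v, (deg ends z v : ZMod 2) = 0) ∧ Odd z.card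
      · obtain ⟨z, hzsub, hzdeg, hzodd⟩ := hodd2
        have hz1 : Disjoint z (T m2) := by
          rw [Finset.disjoint_left]
          intro e he hc
          exact (Finset.mem_sdiff.1 (hzsub he)).2 hc
        obtain ⟨H, hHsub, hHconn, hHdeg, hHodd⟩ :=
          constr ends (hTdisj m2 m1 hne21) hz1 (hTconn m2) (hTconn m1) hzdeg hzodd
        have hHP : H ⊆ P := by
          intro e he
          rcases Finset.mem_union.1 (hHsub he) with h | h
          · rcases Finset.mem_union.1 h with h' | h'
            · exact hW2P h'
            · exact hW1P h'
          · exact (Finset.sdiff_subset) (hzsub h)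
        exact hfinishA H (TT \ M4) ⟨hHconn, hHdeg, hHodd⟩
          (fun a => Finset.disjoint_of_subset_left hHP (hPHs a))
          (Finset.sdiff_subset) hTTM4 (fun m hm => hPOT m hm H hHP)
      -- both dichotomies fail: P is bipartite via some coloring
      push_neg at hodd1 hodd2
      have hno1 : ∀ z, z ⊆ P \ T m1 → (∀ v, (deg ends z v : ZMod 2) = 0) → ¬ Odd z.card :=
        fun z h1 h2 => hodd1 z h1 h2
      have hno2 : ∀ z, z ⊆ P \ T m2 → (∀ v, (deg ends z v : ZMod 2) = 0) → ¬ Odd z.card :=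
        fun z h1 h2 => hodd2 z h1 h2
      obtain ⟨X1, hX1⟩ := bip_of_no_odd ends (P \ T m1) hno1
      obtain ⟨X2, hX2⟩ := bip_of_no_odd ends (P \ T m2) hno2
      have crsum : ∀ (X : Finset V) (u w : V), ¬(u ∈ X ↔ w ∈ X) →
          ((if u ∈ X then (1 : ZMod 2) else 0) + (if w ∈ X then 1 else 0)) = 1 := by
        intro X u w h
        by_cases h1 : u ∈ X <;> by_cases h2 : w ∈ X
        · exact absurd (iff_of_true h1 h2) h
        · rw [if_pos h1, if_neg h2]; decide
        · rw [if_neg h1, if_pos h2]; decide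
        · exact absurd (iff_of_false h1 h2) h
      have sum1cr : ∀ (X : Finset V) (u w : V),
          ((if u ∈ X then (1 : ZMod 2) else 0) + (if w ∈ X then 1 else 0)) = 1 →
          ¬(u ∈ X ↔ w ∈ X) := by
        intro X u w h hc
        by_cases h1 : u ∈ X
        · rw [if_pos h1, if_pos (hc.1 h1)] at h; exact absurd h (by decide)
        · rw [if_neg h1, if_neg (fun hw => h1 (hc.2 hw))] at h; exact absurd h (by decide)
      set c : V → ZMod 2 := fun v =>
        (if v ∈ X1 then (1 : ZMod 2) else 0) + (if v ∈ X2 then 1 else 0) with hcdef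
      have hW3sub1 : T m3 ⊆ P \ T m1 := by
        intro e he
        exact Finset.mem_sdiff.2 ⟨hW3P he, fun hc =>
          Finset.disjoint_left.1 (hTdisj m3 m1 hne31) he hc⟩
      have hW3sub2 : T m3 ⊆ P \ T m2 := by
        intro e he
        exact Finset.mem_sdiff.2 ⟨hW3P he, fun hc =>
          Finset.disjoint_left.1 (hTdisj m3 m2 hne32) he hc⟩
      have hcW3 : ∀ e ∈ T m3, c (ends e).1 = c (ends e).2 := by
        intro e he
        have d1 := crsum X1 _ _ (hX1 e (hW3sub1 he))
        have d2 := crsum X2 _ _ (hX2 e (hW3sub2 he))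
        have : c (ends e).1 + c (ends e).2 = 0 := by
          rw [hcdef]
          have : ∀ a b a' b' : ZMod 2, a + a' = 1 → b + b' = 1 → (a + b) + (a' + b') = 0 := by
            decide
          exact this _ _ _ _ d1 d2
        have hch : ∀ x y : ZMod 2, x + y = 0 → x = y := by decide
        exact hch _ _ this
      have hconst : ∀ u w : V, c u = c w := const_conn ends (hTconn m3) c hcW3
      have hXP : ∀ e ∈ P, ¬(((ends e).1 ∈ X1) ↔ ((ends e).2 ∈ X1)) := by
        intro e he
        by_cases h1 : e ∈ T m1
        · have he2 : e ∈ P \ T m2 := Finset.mem_sdiff.2 ⟨he, fun hc =>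
            Finset.disjoint_left.1 (hTdisj m1 m2 (Ne.symm hne21)) h1 hc⟩
          have d2 := crsum X2 _ _ (hX2 e he2)
          have hc12 := hconst (ends e).1 (ends e).2
          apply sum1cr
          have : ∀ a b a' b' : ZMod 2, a + b = a' + b' → b + b' = 1 → a + a' = 1 := by decide
          exact this _ _ _ _ (by rw [hcdef] at hc12; exact hc12) d2
        · exact hX1 e (Finset.mem_sdiff.2 ⟨he, h1⟩)
      set F : Finset E := bad ends Finset.univ X1 with hF
      have hFk : k ≤ F.card := hbad X1
      have hFiff : ∀ g ∈ F, (((ends g).1 ∈ X1) ↔ ((ends g).2 ∈ X1)) := by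
        intro g hg
        rw [hF] at hg
        exact (Finset.mem_filter.1 hg).2
      have hFP : ∀ g ∈ F, g ∉ P := fun g hg hc => (hXP g hc) (hFiff g hg)
      by_cases hB1 : ∃ m ∈ TT \ M4, ∃ g ∈ F, g ∈ T m
      · obtain ⟨m, hm, g, hgF, hgTm⟩ := hB1
        have hmTT : m ∈ TT := (Finset.mem_sdiff.1 hm).1
        have hmne1 : m ≠ m1 := fun hc => (Finset.mem_sdiff.1 hm).2 (by rw [hc, hM4]; simp)
        have hmne2 : m ≠ m2 := fun hc => (Finset.mem_sdiff.1 hm).2 (by rw [hc, hM4]; simp)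
        have hgW2 : g ∉ T m2 := fun hc =>
          Finset.disjoint_left.1 (hTdisj m m2 hmne2) hgTm hc
        have hgW1 : g ∉ T m1 := fun hc =>
          Finset.disjoint_left.1 (hTdisj m m1 hmne1) hgTm hc
        obtain ⟨z, hzsub, hzdeg, hzodd⟩ := flip_z ends (hTconn m2)
          (fun e he => hXP e (hW2P he)) (hFiff g hgF) hgW2
        have hz1 : Disjoint z (T m1) := by
          rw [Finset.disjoint_left]
          intro e he hc
          rcases Finset.mem_insert.1 (hzsub he) with rfl | h
          · exact hgW1 hc
          · exact Finset.disjoint_left.1 (hTdisj m2 m1 hne21) h hc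
        obtain ⟨H, hHsub, hHconn, hHdeg, hHodd⟩ :=
          constr ends (hTdisj m1 m2 (Ne.symm hne21)) hz1 (hTconn m1) (hTconn m2) hzdeg hzodd
        have hHsub' : H ⊆ insert g (T m1 ∪ T m2) := by
          intro e he
          rcases Finset.mem_union.1 (hHsub he) with h | h
          · rcases Finset.mem_union.1 h with h' | h'
            · exact Finset.mem_insert_of_mem (Finset.mem_union_left _ h')
            · exact Finset.mem_insert_of_mem (Finset.mem_union_right _ h')
          · rcases Finset.mem_insert.1 (hzsub h) with rfl | h'
            · exact Finset.mem_insert_self _ _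
            · exact Finset.mem_insert_of_mem (Finset.mem_union_right _ h')
        have hHdisjHs : ∀ a, Disjoint H (Hs a) := by
          intro a
          rw [Finset.disjoint_left]
          intro e he hc
          rcases Finset.mem_insert.1 (hHsub' he) with rfl | h
          · exact Finset.disjoint_left.1 (htree m hmTT a) hgTm hc
          · rcases Finset.mem_union.1 h with h' | h'
            · exact Finset.disjoint_left.1 (hPHs a) (hW1P h') hc
            · exact Finset.disjoint_left.1 (hPHs a) (hW2P h') hc
        -- remove m1, m2, m from TT
        have hTT3 : 4 * (k - (i+1)) ≤ (((TT.erase m1).erase m2).erase m).card := by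
          have e1 : m ∈ (TT.erase m1).erase m2 :=
            Finset.mem_erase.2 ⟨hmne2, Finset.mem_erase.2 ⟨hmne1, hmTT⟩⟩
          have e2 : m2 ∈ TT.erase m1 := hm2
          have c1 := Finset.card_erase_of_mem e1
          have c2 := Finset.card_erase_of_mem e2
          have c3 := Finset.card_erase_of_mem hm1
          omega
        refine hfinishA H (((TT.erase m1).erase m2).erase m) ⟨hHconn, hHdeg, hHodd⟩
          hHdisjHs ?_ hTT3 ?_
        · intro x hx
          exact Finset.mem_of_mem_erase (Finset.mem_of_mem_erase (Finset.mem_of_mem_erase hx))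
        · intro m' hm'
          have hm'ne : m' ≠ m ∧ m' ≠ m2 ∧ m' ≠ m1 := by
            refine ⟨Finset.ne_of_mem_erase hm', ?_, ?_⟩
            · exact Finset.ne_of_mem_erase (Finset.mem_of_mem_erase hm')
            · exact Finset.ne_of_mem_erase
                (Finset.mem_of_mem_erase (Finset.mem_of_mem_erase hm'))
          rw [Finset.disjoint_left]
          intro e he heH
          rcases Finset.mem_insert.1 (hHsub' heH) with heq | h
          · exact Finset.disjoint_left.1 (hTdisj m' m hm'ne.1) he (heq ▸ hgTm)
          · rcases Finset.mem_union.1 h with h' | h'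
            · exact Finset.disjoint_left.1 (hTdisj m' m1 hm'ne.2.2) he h'
            · exact Finset.disjoint_left.1 (hTdisj m' m2 hm'ne.2.1) he h'
      -- Case B2: all bad edges live inside previously built subgraphs; exchange argument
      push_neg at hB1
      have hFHU : ∀ g ∈ F, g ∈ HU := by
        intro g hg
        have hnP := hFP g hg
        by_contra hc
        have hOTg : g ∈ OT := by
          by_contra hc2
          exact hnP (Finset.mem_sdiff.2 ⟨Finset.mem_sdiff.2 ⟨Finset.mem_univ g, hc⟩, hc2⟩)
        obtain ⟨m, hm, hgm⟩ := Finset.mem_biUnion.1 hOTg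
        exact (hB1 m hm g hg) hgm
      have hsum : F.card ≤ ∑ a : Fin i, (F ∩ Hs a).card := by
        have hsubB : F ⊆ Finset.univ.biUnion (fun a : Fin i => F ∩ Hs a) := by
          intro g hg
          obtain ⟨a, _, hga⟩ := Finset.mem_biUnion.1 (hFHU g hg)
          exact Finset.mem_biUnion.2 ⟨a, Finset.mem_univ a, Finset.mem_inter.2 ⟨hg, hga⟩⟩
        calc F.card ≤ _ := Finset.card_le_card hsubB
          _ ≤ _ := Finset.card_biUnion_le
      have hex : ∃ a : Fin i, 2 ≤ (F ∩ Hs a).card := by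
        by_contra hc
        push_neg at hc
        have h1 : ∑ a : Fin i, (F ∩ Hs a).card ≤ ∑ _a : Fin i, 1 :=
          Finset.sum_le_sum (fun a _ => by have := hc a; omega)
        rw [Finset.sum_const, Finset.card_univ, Fintype.card_fin, smul_eq_mul, mul_one] at h1
        omega
      obtain ⟨a, ha2⟩ := hex
      obtain ⟨g, hgmem, g', hg'mem, hgg'⟩ :=
        Finset.one_lt_card.1 (by omega : 1 < (F ∩ Hs a).card)
      have hgF : g ∈ F := (Finset.mem_inter.1 hgmem).1
      have hgHsa : g ∈ Hs a := (Finset.mem_inter.1 hgmem).2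
      have hg'F : g' ∈ F := (Finset.mem_inter.1 hg'mem).1
      have hg'Hsa : g' ∈ Hs a := (Finset.mem_inter.1 hg'mem).2
      have hgT : ∀ mm, mm ∈ TT → g ∉ T mm :=
        fun mm hmm hc => Finset.disjoint_left.1 (htree mm hmm a) hc hgHsa
      have hg'T : ∀ mm, mm ∈ TT → g' ∉ T mm :=
        fun mm hmm hc => Finset.disjoint_left.1 (htree mm hmm a) hc hg'Hsa
      -- build the new subgraph Ha from trees m1, m2 and flip edge g
      obtain ⟨z, hzsub, hzdeg, hzodd⟩ := flip_z ends (hTconn m2)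
        (fun e he => hXP e (hW2P he)) (hFiff g hgF) (hgT m2 hm2')
      have hz1 : Disjoint z (T m1) := by
        rw [Finset.disjoint_left]
        intro e he hc
        rcases Finset.mem_insert.1 (hzsub he) with rfl | h
        · exact (hgT m1 hm1) hc
        · exact Finset.disjoint_left.1 (hTdisj m2 m1 hne21) h hc
      obtain ⟨Ha, hHasub, hHaconn, hHadeg, hHaodd⟩ :=
        constr ends (hTdisj m1 m2 (Ne.symm hne21)) hz1 (hTconn m1) (hTconn m2) hzdeg hzodd
      have hHasub' : Ha ⊆ insert g (T m1 ∪ T m2) := by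
        intro e he
        rcases Finset.mem_union.1 (hHasub he) with h | h
        · rcases Finset.mem_union.1 h with h' | h'
          · exact Finset.mem_insert_of_mem (Finset.mem_union_left _ h')
          · exact Finset.mem_insert_of_mem (Finset.mem_union_right _ h')
        · rcases Finset.mem_insert.1 (hzsub h) with rfl | h'
          · exact Finset.mem_insert_self _ _
          · exact Finset.mem_insert_of_mem (Finset.mem_union_right _ h')
      -- build the replacement Hb from Hs a minus g, g' plus links in trees m3, m4
      obtain ⟨P1, hP1sub, hP1deg, hP1rtg⟩ :=
        link_exists ends (T m3) (hTconn m3 (ends g).1 (ends g).2)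
      obtain ⟨P2, hP2sub, hP2deg, hP2rtg⟩ :=
        link_exists ends (T m4) (hTconn m4 (ends g').1 (ends g').2)
      set Hb : Finset E := ((Hs a \ {g, g'}) ∪ P1) ∪ P2 with hHbdef
      have hggsub : ({g, g'} : Finset E) ⊆ Hs a := by
        intro x hx
        rcases Finset.mem_insert.1 hx with rfl | hx
        · exact hgHsa
        · rw [Finset.mem_singleton.1 hx]; exact hg'Hsa
      have hD1 : Disjoint (Hs a \ {g, g'}) P1 := by
        rw [Finset.disjoint_left]
        intro e he hc
        exact Finset.disjoint_left.1 (htree m3 hm3' a) (hP1sub hc) (Finset.mem_sdiff.1 he).1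
      have hD2 : Disjoint ((Hs a \ {g, g'}) ∪ P1) P2 := by
        rw [Finset.disjoint_left]
        intro e he hc
        rcases Finset.mem_union.1 he with h | h
        · exact Finset.disjoint_left.1 (htree m4 hm4' a) (hP2sub hc) (Finset.mem_sdiff.1 h).1
        · exact Finset.disjoint_left.1 (hTdisj m3 m4 (Ne.symm hne43)) (hP1sub h) (hP2sub hc)
      have hgg2 : ({g, g'} : Finset E).card = 2 := by
        rw [Finset.card_insert_of_notMem (by simp [hgg']), Finset.card_singleton]
      -- degrees of Hb
      have hHbdeg : ∀ v, (deg ends Hb v : ZMod 2) = 0 := by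
        intro v
        rw [hHbdef, degZ_union ends hD2, degZ_union ends hD1,
          degZ_sdiff ends hggsub, (hgood a).2.1 v]
        have hgg'deg : (deg ends ({g, g'} : Finset E) v : ZMod 2) =
            ind (ends g).1 v + ind (ends g).2 v + (ind (ends g').1 v + ind (ends g').2 v) := by
          have hgns : g ∉ ({g'} : Finset E) := by simp [hgg']
          rw [show ({g, g'} : Finset E) = insert g {g'} from rfl,
            degZ_insert ends hgns, degZ_singleton]
        rw [hgg'deg, hP1deg v, hP2deg v]
        ring_nf
        simp only [show ∀ x : ZMod 2, x * 2 = 0 from by decide]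
        ring_nf
      -- cardinality of Hb is odd
      have hHbodd : Odd Hb.card := by
        rw [← oddZ, hHbdef, Finset.card_union_of_disjoint hD2,
          Finset.card_union_of_disjoint hD1]
        push_cast
        have hsd : ((Hs a \ {g, g'}).card : ZMod 2) = 1 := by
          have h1 : (Hs a \ {g, g'}).card + 2 = (Hs a).card := by
            rw [← hgg2]; exact Finset.card_sdiff_add_card_eq_card hggsub
          obtain ⟨t, ht⟩ := (hgood a).2.2
          have hx : (Hs a \ {g, g'}).card = 2 * (t - 1) + 1 := by omega
          exact oddZ.2 ⟨t - 1, hx⟩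
        have hP1c : ((P1.card : ℕ) : ZMod 2) = 0 := by
          rw [link_parity ends hP1deg (fun e he => hXP e (hW3P (hP1sub he)))]
          by_cases h1 : (ends g).1 ∈ X1
          · rw [if_pos h1, if_pos ((hFiff g hgF).1 h1)]; decide
          · rw [if_neg h1, if_neg (fun hc => h1 ((hFiff g hgF).2 hc))]; decide
        have hP2c : ((P2.card : ℕ) : ZMod 2) = 0 := by
          rw [link_parity ends hP2deg (fun e he => hXP e (hW4P (hP2sub he)))]
          by_cases h1 : (ends g').1 ∈ X1
          · rw [if_pos h1, if_pos ((hFiff g' hg'F).1 h1)]; decide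
          · rw [if_neg h1, if_neg (fun hc => h1 ((hFiff g' hg'F).2 hc))]; decide
        rw [hsd, hP1c, hP2c]
        decide
      -- connectivity of Hb
      have hHbconn : ConnOn ends Hb := by
        apply conn_replace ends (hgood a).1
        intro e he
        by_cases heg : e = g
        · subst heg
          refine Or.inr (rtg_mono ends ?_ hP1rtg)
          intro x hx
          exact Finset.mem_union_left _ (Finset.mem_union_right _ hx)
        by_cases heg' : e = g'
        · subst heg'
          refine Or.inr (rtg_mono ends ?_ hP2rtg)
          intro x hx
          exact Finset.mem_union_right _ hx
        · refine Or.inl ?_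
          refine Finset.mem_union_left _ (Finset.mem_union_left _ ?_)
          exact Finset.mem_sdiff.2 ⟨he, by simp [heg, heg']⟩
      -- disjointness facts
      have hgnotHb : g ∉ Hb := by
        intro hc
        rcases Finset.mem_union.1 hc with h | h
        · rcases Finset.mem_union.1 h with h' | h'
          · exact (Finset.mem_sdiff.1 h').2 (by simp)
          · exact (hgT m3 hm3') (hP1sub h')
        · exact (hgT m4 hm4') (hP2sub h)
      have hHaHb : Disjoint Ha Hb := by
        rw [Finset.disjoint_left]
        intro e he hc
        rcases Finset.mem_insert.1 (hHasub' he) with rfl | h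
        · exact hgnotHb hc
        · rcases Finset.mem_union.1 hc with h2 | h2
          · rcases Finset.mem_union.1 h2 with h3 | h3
            · rcases Finset.mem_union.1 h with h4 | h4
              · exact Finset.disjoint_left.1 (htree m1 hm1 a) h4 (Finset.mem_sdiff.1 h3).1
              · exact Finset.disjoint_left.1 (htree m2 hm2' a) h4 (Finset.mem_sdiff.1 h3).1
            · rcases Finset.mem_union.1 h with h4 | h4
              · exact Finset.disjoint_left.1 (hTdisj m1 m3 (Ne.symm hne31)) h4 (hP1sub h3)
              · exact Finset.disjoint_left.1 (hTdisj m2 m3 (Ne.symm hne32)) h4 (hP1sub h3)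
          · rcases Finset.mem_union.1 h with h4 | h4
            · exact Finset.disjoint_left.1 (hTdisj m1 m4 (Ne.symm hne41)) h4 (hP2sub h2)
            · exact Finset.disjoint_left.1 (hTdisj m2 m4 (Ne.symm hne42)) h4 (hP2sub h2)
      have haold : ∀ c, c ≠ a → Disjoint Ha (Hs c) := by
        intro c hca
        rw [Finset.disjoint_left]
        intro e he hc
        rcases Finset.mem_insert.1 (hHasub' he) with rfl | h
        · exact Finset.disjoint_left.1 (hdisj a c (fun hcc => hca hcc.symm)) hgHsa hc
        · rcases Finset.mem_union.1 h with h4 | h4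
          · exact Finset.disjoint_left.1 (hPHs c) (hW1P h4) hc
          · exact Finset.disjoint_left.1 (hPHs c) (hW2P h4) hc
      have hbold : ∀ c, c ≠ a → Disjoint Hb (Hs c) := by
        intro c hca
        rw [Finset.disjoint_left]
        intro e he hc
        rcases Finset.mem_union.1 he with h | h
        · rcases Finset.mem_union.1 h with h' | h'
          · exact Finset.disjoint_left.1 (hdisj a c (fun hcc => hca hcc.symm))
              (Finset.mem_sdiff.1 h').1 hc
          · exact Finset.disjoint_left.1 (hPHs c) (hW3P (hP1sub h')) hc
        · exact Finset.disjoint_left.1 (hPHs c) (hW4P (hP2sub h)) hc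
      obtain ⟨Hs', hdisj', hgood', hchar⟩ := fam_replace_extend Q Hs a Hb Ha hdisj
        (fun c _ => hgood c) ⟨hHaconn, hHadeg, hHaodd⟩ ⟨hHbconn, hHbdeg, hHbodd⟩
        hHaHb haold hbold
      refine ⟨Hs', TT \ M4, hdisj', hgood', hTTM4, ?_⟩
      intro m' hm' j
      have hm'TT : m' ∈ TT := (Finset.mem_sdiff.1 hm').1
      have hm'ne : m' ≠ m1 ∧ m' ≠ m2 ∧ m' ≠ m3 ∧ m' ≠ m4 := by
        have hnotM4 : m' ∉ M4 := (Finset.mem_sdiff.1 hm').2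
        refine ⟨?_, ?_, ?_, ?_⟩ <;> intro hcc <;> exact hnotM4 (by rw [hcc, hM4]; simp)
      rcases hchar j with he | he | ⟨c, _, he⟩
      · rw [he]
        rw [Finset.disjoint_left]
        intro e he2 hc
        rcases Finset.mem_insert.1 (hHasub' hc) with heq | h
        · exact (hgT m' hm'TT) (heq ▸ he2)
        · rcases Finset.mem_union.1 h with h4 | h4
          · exact Finset.disjoint_left.1 (hTdisj m' m1 hm'ne.1) he2 h4
          · exact Finset.disjoint_left.1 (hTdisj m' m2 hm'ne.2.1) he2 h4
      · rw [he]
        rw [Finset.disjoint_left]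
        intro e he2 hc
        rcases Finset.mem_union.1 hc with h | h
        · rcases Finset.mem_union.1 h with h' | h'
          · exact Finset.disjoint_left.1 (htree m' hm'TT a) he2 (Finset.mem_sdiff.1 h').1
          · exact Finset.disjoint_left.1 (hTdisj m' m3 hm'ne.2.2.1) he2 (hP1sub h')
        · exact Finset.disjoint_left.1 (hTdisj m' m4 hm'ne.2.2.2) he2 (hP2sub h)
      · rw [he]
        exact htree m' hm'TT c
  obtain ⟨Hs, _, h1, h2, _, _⟩ := main k le_rfl
  refine ⟨Hs, h1, ?_⟩
  intro a
  exact ⟨(h2 a).1, fun v => evenZ.1 ((h2 a).2.1 v), (h2 a).2.2⟩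

theorem stmt13 {V E : Type} [Fintype V] [Fintype E] [DecidableEq V] [DecidableEq E]
    (ends : E → V × V) (k : ℕ)
    (htc : TreeConnOn ends (4 * k) Finset.univ)
    (hbi : k ≤ biIndexOn ends Finset.univ) :
    ∃ G : Fin k → Finset E,
      (∀ i j, i ≠ j → Disjoint (G i) (G j)) ∧
      ∀ i, ConnOn ends (G i) ∧ (∀ v : V, Even (deg ends (G i) v)) ∧ Odd (G i).card := by
  exact stmt13' ends k htc hbi
end

section
/- Let k, q be positive integers with k ≤ q, let G be a bipartite multigraph, and let f be a nonnegative integer-valued function on V(G). If G has a spanning subgraph H with d_H(v) = q·f(v) for every vertex v, then G has a spanning subgraph F with d_F(v) = k·f(v) for every vertex v. -/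
open MG Finset

set_option linter.unusedSectionVars false

namespace MGAux

open MG Finset

variable {V E : Type} [Fintype V] [Fintype E] [DecidableEq V] [DecidableEq E]

/-- The end of `e` lying in `X`. -/
def xE (ends : E → V × V) (X : Finset V) (e : E) : V :=
  if (ends e).1 ∈ X then (ends e).1 else (ends e).2

/-- The end of `e` lying outside `X`. -/
def yE (ends : E → V × V) (X : Finset V) (e : E) : V :=
  if (ends e).1 ∈ X then (ends e).2 else (ends e).1

variable {ends : E → V × V} {X : Finset V}
variable (hbip : ∀ e : E, ¬ (((ends e).1 ∈ X) ↔ ((ends e).2 ∈ X)))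

include hbip

lemma xE_mem (e : E) : xE ends X e ∈ X := by
  have := hbip e
  unfold xE
  split <;> tauto

lemma yE_not_mem (e : E) : yE ends X e ∉ X := by
  have := hbip e
  unfold yE
  split <;> tauto

lemma degX (S : Finset E) {v : V} (hv : v ∈ X) :
    deg ends S v = (S.filter fun e => xE ends X e = v).card := by
  have hsplit : (S.filter fun e => xE ends X e = v)
      = (S.filter fun e => (ends e).1 = v) ∪ (S.filter fun e => (ends e).2 = v) := by
    ext e
    have := hbip e
    rw [mem_filter]
    simp only [mem_filter, mem_union, xE]
    split <;> constructor <;> intro h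
    · exact Or.inl ⟨h.1, h.2⟩
    · rcases h with h | h
      · exact ⟨h.1, h.2⟩
      · exact absurd (h.2 ▸ hv) (by tauto)
    · exact Or.inr ⟨h.1, h.2⟩
    · rcases h with h | h
      · exact absurd (h.2 ▸ hv) (by tauto)
      · exact ⟨h.1, h.2⟩
  have hdisj : Disjoint (S.filter fun e => (ends e).1 = v) (S.filter fun e => (ends e).2 = v) := by
    rw [disjoint_left]
    intro e h1 h2
    simp only [mem_filter] at h1 h2
    exact hbip e (by rw [h1.2, h2.2])
  rw [deg, hsplit, card_union_of_disjoint hdisj]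

lemma degY (S : Finset E) {v : V} (hv : v ∉ X) :
    deg ends S v = (S.filter fun e => yE ends X e = v).card := by
  have hsplit : (S.filter fun e => yE ends X e = v)
      = (S.filter fun e => (ends e).1 = v) ∪ (S.filter fun e => (ends e).2 = v) := by
    ext e
    have := hbip e
    rw [mem_filter]
    simp only [mem_filter, mem_union, yE]
    split <;> constructor <;> intro h
    · exact Or.inr ⟨h.1, h.2⟩
    · rcases h with h | h
      · exact (hv (h.2 ▸ (by tauto : (ends e).1 ∈ X))).elim
      · exact ⟨h.1, h.2⟩
    · exact Or.inl ⟨h.1, h.2⟩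
    · rcases h with h | h
      · exact ⟨h.1, h.2⟩
      · have h2 : (ends e).2 ∈ X := by tauto
        exact (hv (h.2 ▸ h2)).elim
  have hdisj : Disjoint (S.filter fun e => (ends e).1 = v) (S.filter fun e => (ends e).2 = v) := by
    rw [disjoint_left]
    intro e h1 h2
    simp only [mem_filter] at h1 h2
    exact hbip e (by rw [h1.2, h2.2])
  rw [deg, hsplit, card_union_of_disjoint hdisj]

end MGAux

namespace MGAux2
open MG MGAux Finset

set_option linter.unusedSectionVars false

lemma div_eq_iff' (x q j : ℕ) (hq : 0 < q) : x / q = j ↔ q*j ≤ x ∧ x < q*j + q := by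
  constructor
  · rintro rfl
    have h1 := Nat.div_add_mod x q
    have h2 := Nat.mod_lt x hq
    omega
  · rintro ⟨h1, h2⟩
    exact Nat.div_eq_of_lt_le (by rwa [mul_comm]) (by rw [add_mul, one_mul, mul_comm]; omega)

/-- Fiber counting: if `g` enumerates `s` (card `q*m`) injectively into `[0, q*m)`,
then each block `g e / q = j` with `j < m` has exactly `q` elements. -/
lemma fiber_card {E : Type} [DecidableEq E] (s : Finset E) (g : E → ℕ) (q m j : ℕ)
    (hq : 0 < q) (hcard : s.card = q * m) (hinj : Set.InjOn g ↑s)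
    (hlt : ∀ e ∈ s, g e < q * m) (hj : j < m) :
    (s.filter fun e => g e / q = j).card = q := by
  have himg : s.image g = range (q * m) := by
    apply eq_of_subset_of_card_le
    · intro x hx
      simp only [mem_image] at hx
      obtain ⟨e, he, rfl⟩ := hx
      exact mem_range.2 (hlt e he)
    · rw [card_range, card_image_of_injOn hinj, hcard]
  have himg2 : (s.filter fun e => g e / q = j).image g = Ico (q*j) (q*j+q) := by
    ext x
    simp only [mem_image, mem_filter, mem_Ico]
    constructor
    · rintro ⟨e, ⟨he, hdiv⟩, rfl⟩
      exact (div_eq_iff' _ _ _ hq).1 hdiv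
    · rintro ⟨h1, h2⟩
      have hxr : x ∈ range (q * m) := mem_range.2 (by
        have : q * (j+1) ≤ q * m := Nat.mul_le_mul_left q hj
        have : q*j + q = q*(j+1) := by ring
        omega)
      rw [← himg] at hxr
      obtain ⟨e, he, rfl⟩ := mem_image.1 hxr
      exact ⟨e, ⟨he, (div_eq_iff' _ _ _ hq).2 ⟨h1, h2⟩⟩, rfl⟩
  have : ((s.filter fun e => g e / q = j).image g).card
      = (s.filter fun e => g e / q = j).card :=
    card_image_of_injOn (hinj.mono (fun e he => (mem_filter.1 (by exact_mod_cast he)).1))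
  rw [himg2, Nat.card_Ico] at this
  omega

end MGAux2


namespace MGAux3
open MG MGAux MGAux2 Finset

variable {V E : Type} [Fintype V] [Fintype E] [DecidableEq V] [DecidableEq E]

lemma extract {ends : E → V × V} {X : Finset V}
    (hbip : ∀ e : E, ¬ (((ends e).1 ∈ X) ↔ ((ends e).2 ∈ X)))
    (f : V → ℕ) (q : ℕ) (hq : 0 < q) (H : Finset E)
    (hH : ∀ v : V, deg ends H v = q * f v) :
    ∃ M : Finset E, M ⊆ H ∧ ∀ v : V, deg ends M v = f v := by
  classical
  set sX : V → Finset E := fun v => H.filter fun e => xE ends X e = v with hsXdef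
  set sY : V → Finset E := fun v => H.filter fun e => yE ends X e = v with hsYdef
  have cardX : ∀ v ∈ X, (sX v).card = q * f v := fun v hv => by
    rw [hsXdef, ← degX hbip H hv, hH]
  have cardY : ∀ v ∉ X, (sY v).card = q * f v := fun v hv => by
    rw [hsYdef, ← degY hbip H hv, hH]
  -- enumerations of the edge sets at each vertex
  have hgex : ∀ s : Finset E, ∃ g : E → ℕ,
      Set.InjOn g ↑s ∧ ∀ e ∈ s, g e < s.card := by
    intro s
    refine ⟨fun e => if he : e ∈ s then (s.equivFin ⟨e, he⟩ : ℕ) else 0, ?_, ?_⟩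
    · intro a ha b hb hab
      simp only [Finset.mem_coe] at ha hb
      simp only at hab
      rw [dif_pos ha, dif_pos hb] at hab
      have := s.equivFin.injective (Fin.ext hab)
      exact Subtype.ext_iff.1 this
    · intro e he
      show (if he : e ∈ s then (s.equivFin ⟨e, he⟩ : ℕ) else 0) < s.card
      rw [dif_pos he]
      exact (s.equivFin ⟨e, he⟩).2
  choose gg hgInj hgLt using hgex
  set rX : E → ℕ := fun e => gg (sX (xE ends X e)) e / q with hrXdef
  set rY : E → ℕ := fun e => gg (sY (yE ends X e)) e / q with hrYdef
  have memX : ∀ e ∈ H, e ∈ sX (xE ends X e) := by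
    intro e he; simp [hsXdef, he]
  have memY : ∀ e ∈ H, e ∈ sY (yE ends X e) := by
    intro e he; simp [hsYdef, he]
  have hrXlt : ∀ e ∈ H, rX e < f (xE ends X e) := by
    intro e he
    have h1 := hgLt _ _ (memX e he)
    rw [cardX _ (xE_mem hbip e)] at h1
    rw [hrXdef]
    exact Nat.div_lt_iff_lt_mul hq |>.2 (by rw [mul_comm]; exact h1)
  have hrYlt : ∀ e ∈ H, rY e < f (yE ends X e) := by
    intro e he
    have h1 := hgLt _ _ (memY e he)
    rw [cardY _ (yE_not_mem hbip e)] at h1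
    rw [hrYdef]
    exact Nat.div_lt_iff_lt_mul hq |>.2 (by rw [mul_comm]; exact h1)
  have fiberX : ∀ v ∈ X, ∀ j < f v, ((sX v).filter fun e => rX e = j).card = q := by
    intro v hv j hj
    have hfe : (sX v).filter (fun e => rX e = j)
        = (sX v).filter (fun e => gg (sX v) e / q = j) := by
      apply filter_congr
      intro e he
      have hxv : xE ends X e = v := (mem_filter.1 he).2
      rw [hrXdef]
      simp [hxv]
    rw [hfe]
    exact fiber_card (sX v) (gg (sX v)) q (f v) j hq (cardX v hv) (hgInj _)
      (fun e he => (cardX v hv) ▸ hgLt _ e he) hj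
  have fiberY : ∀ v ∉ X, ∀ j < f v, ((sY v).filter fun e => rY e = j).card = q := by
    intro v hv j hj
    have hfe : (sY v).filter (fun e => rY e = j)
        = (sY v).filter (fun e => gg (sY v) e / q = j) := by
      apply filter_congr
      intro e he
      have hxv : yE ends X e = v := (mem_filter.1 he).2
      rw [hrYdef]
      simp [hxv]
    rw [hfe]
    exact fiber_card (sY v) (gg (sY v)) q (f v) j hq (cardY v hv) (hgInj _)
      (fun e he => (cardY v hv) ▸ hgLt _ e he) hj
  -- Hall setup
  set ι := Σ v : {x // x ∈ X}, Fin (f v.1) with hιdef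
  set F : ι → Finset E := fun i => (sX i.1.1).filter fun e => rX e = (i.2 : ℕ) with hFdef
  set t : ι → Finset (V × ℕ) := fun i => (F i).image fun e => (yE ends X e, rY e) with htdef
  have hFsub : ∀ i, F i ⊆ H := fun i => (filter_subset _ _).trans (filter_subset _ _)
  have hFcard : ∀ i : ι, (F i).card = q := fun i =>
    fiberX i.1.1 i.1.2 (i.2 : ℕ) i.2.2
  have hFmem : ∀ i : ι, ∀ e ∈ F i, e ∈ H ∧ xE ends X e = i.1.1 ∧ rX e = (i.2 : ℕ) := by
    intro i e he
    have h1 := mem_filter.1 he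
    have h2 := mem_filter.1 h1.1
    exact ⟨h2.1, h2.2, h1.2⟩
  have hall : ∀ S : Finset ι, S.card ≤ (S.biUnion t).card := by
    intro S
    set ES := S.biUnion F with hESdef
    have hdisj : ∀ i ∈ S, ∀ j ∈ S, i ≠ j → Disjoint (F i) (F j) := by
      intro i _ j _ hij
      rw [disjoint_left]
      intro e hei hej
      obtain ⟨_, hx1, hr1⟩ := hFmem i e hei
      obtain ⟨_, hx2, hr2⟩ := hFmem j e hej
      apply hij
      rcases i with ⟨⟨v, hv⟩, a⟩
      rcases j with ⟨⟨w, hw⟩, b⟩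
      simp only at hx1 hx2 hr1 hr2
      have hvw : v = w := by rw [← hx1, ← hx2]
      subst hvw
      have hab : a = b := Fin.ext (by rw [← hr1, ← hr2])
      subst hab
      rfl
    have hlow : q * S.card ≤ ES.card := by
      rw [hESdef, card_biUnion hdisj]
      apply le_of_eq
      calc q * S.card = ∑ _i ∈ S, q := by rw [sum_const, smul_eq_mul, mul_comm]
        _ = ∑ i ∈ S, (F i).card := by
            apply sum_congr rfl
            intro i _
            rw [hFcard i]
    have hup : ES.card ≤ q * (S.biUnion t).card := by
      apply card_le_mul_card_image_of_maps_to
        (f := fun e => (yE ends X e, rY e)) (t := S.biUnion t)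
      · intro e he
        obtain ⟨i, hiS, hei⟩ := mem_biUnion.1 he
        exact mem_biUnion.2 ⟨i, hiS, mem_image_of_mem _ hei⟩
      · intro b hb
        obtain ⟨i, _, hbt⟩ := mem_biUnion.1 hb
        obtain ⟨e0, he0, hbeq⟩ := mem_image.1 hbt
        have he0H : e0 ∈ H := hFsub i he0
        have hu : yE ends X e0 ∉ X := yE_not_mem hbip e0
        have hj : rY e0 < f (yE ends X e0) := hrYlt e0 he0H
        have hsubset : ES.filter (fun e => (yE ends X e, rY e) = b)
            ⊆ (sY (yE ends X e0)).filter fun e => rY e = rY e0 := by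
          intro e he
          have h1 := mem_filter.1 he
          have heH : e ∈ H := by
            obtain ⟨i', _, hei'⟩ := mem_biUnion.1 h1.1
            exact hFsub i' hei'
          rw [← hbeq] at h1
          have h2 : yE ends X e = yE ends X e0 := congrArg Prod.fst h1.2
          have h3 : rY e = rY e0 := congrArg Prod.snd h1.2
          rw [mem_filter, hsYdef]
          exact ⟨by simp [heH, h2], h3⟩
        calc (ES.filter (fun e => (yE ends X e, rY e) = b)).card
            ≤ ((sY (yE ends X e0)).filter fun e => rY e = rY e0).card :=
              card_le_card hsubset
          _ = q := fiberY _ hu _ hj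
    have := hlow.trans hup
    exact Nat.le_of_mul_le_mul_left this hq
  obtain ⟨φ, hφinj, hφmem⟩ := (Finset.all_card_le_biUnion_card_iff_exists_injective t).1 hall
  have hsel : ∀ i : ι, ∃ e : E, e ∈ H ∧ xE ends X e = i.1.1 ∧ rX e = (i.2 : ℕ) ∧
      (yE ends X e, rY e) = φ i := by
    intro i
    obtain ⟨e, he, heq⟩ := mem_image.1 (hφmem i)
    obtain ⟨h1, h2, h3⟩ := hFmem i e he
    exact ⟨e, h1, h2, h3, heq⟩
  choose ee heH heX heR heφ using hsel
  have heinj : Function.Injective ee := by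
    intro i j hij
    rcases i with ⟨⟨v, hv⟩, a⟩
    rcases j with ⟨⟨w, hw⟩, b⟩
    have h1 : v = w := by
      have := heX ⟨⟨v, hv⟩, a⟩
      have h2 := heX ⟨⟨w, hw⟩, b⟩
      simp only at this h2
      rw [← this, ← h2, hij]
    subst h1
    have h2 : (a : ℕ) = (b : ℕ) := by
      have := heR ⟨⟨v, hv⟩, a⟩
      have h3 := heR ⟨⟨v, hw⟩, b⟩
      simp only at this h3
      rw [← this, ← h3, hij]
    have hab : a = b := Fin.ext h2
    subst hab
    rfl
  set M : Finset E := Finset.univ.image ee with hMdef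
  have hMH : M ⊆ H := by
    intro m hm
    obtain ⟨i, _, rfl⟩ := mem_image.1 hm
    exact heH i
  refine ⟨M, hMH, ?_⟩
  -- degrees in X
  have degMX : ∀ v ∈ X, deg ends M v = f v := by
    intro v hv
    rw [degX hbip M hv]
    have himg : M.filter (fun e => xE ends X e = v)
        = Finset.univ.image fun a : Fin (f v) => ee ⟨⟨v, hv⟩, a⟩ := by
      ext m
      simp only [mem_filter, mem_image, mem_univ, true_and]
      constructor
      · rintro ⟨hm, hxm⟩
        obtain ⟨i, _, rfl⟩ := mem_image.1 hm
        rcases i with ⟨⟨w, hw⟩, a⟩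
        have : w = v := by
          have := heX ⟨⟨w, hw⟩, a⟩
          simp only at this
          rw [← hxm, this]
        subst this
        exact ⟨a, rfl⟩
      · rintro ⟨a, rfl⟩
        exact ⟨mem_image_of_mem _ (mem_univ _), heX ⟨⟨v, hv⟩, a⟩⟩
    rw [himg, card_image_of_injective _ (fun a b hab => by
      have := heinj hab
      exact (Fin.ext (congrArg (fun i : ι => (i.2 : ℕ)) this) : a = b)), card_univ,
      Fintype.card_fin]
  -- degrees outside X: at most f, and sums match
  have degMY_le : ∀ u ∉ X, deg ends M u ≤ f u := by
    intro u hu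
    rw [degY hbip M hu]
    have : (M.filter fun e => yE ends X e = u).card ≤ (range (f u)).card := by
      apply card_le_card_of_injOn rY
      · intro m hm
        have h1 := mem_filter.1 hm
        have := hrYlt m (hMH h1.1)
        rw [h1.2] at this
        exact mem_range.2 this
      · intro m hm m' hm' hr
        have h1 := mem_filter.1 hm
        have h1' := mem_filter.1 hm'
        obtain ⟨i, _, rfl⟩ := mem_image.1 h1.1
        obtain ⟨i', _, rfl⟩ := mem_image.1 h1'.1
        have hφ : φ i = φ i' := by
          rw [← heφ i, ← heφ i', h1.2, h1'.2, hr]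
        rw [hφinj hφ]
    simpa using this
  have hMcard : M.card = ∑ v ∈ X, f v := by
    have hcard : Fintype.card ((v : {x // x ∈ X}) × Fin (f v.1)) = ∑ v ∈ X, f v := by
      rw [Fintype.card_sigma]
      simp only [Fintype.card_fin]
      exact Finset.sum_coe_sort X f
    rw [hMdef, card_image_of_injective _ heinj, card_univ]
    exact hcard
  have hsumH_X : H.card = q * ∑ v ∈ X, f v := by
    rw [card_eq_sum_card_fiberwise (f := xE ends X) (t := X) (fun e _ => xE_mem hbip e)]
    rw [mul_sum]
    apply sum_congr rfl
    intro v hv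
    rw [← degX hbip H hv, hH]
  have hsumH_Y : H.card = q * ∑ v ∈ Xᶜ, f v := by
    rw [card_eq_sum_card_fiberwise (f := yE ends X) (t := Xᶜ)
      (fun e _ => Finset.mem_compl.2 (yE_not_mem hbip e))]
    rw [mul_sum]
    apply sum_congr rfl
    intro v hv
    rw [← degY hbip H (Finset.mem_compl.1 hv), hH]
  have hXY : ∑ v ∈ X, f v = ∑ v ∈ Xᶜ, f v :=
    Nat.eq_of_mul_eq_mul_left hq (by rw [← hsumH_X, ← hsumH_Y])
  have hsumM_Y : ∑ u ∈ Xᶜ, deg ends M u = M.card := by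
    rw [card_eq_sum_card_fiberwise (f := yE ends X) (t := Xᶜ)
      (fun e _ => Finset.mem_compl.2 (yE_not_mem hbip e))]
    apply sum_congr rfl
    intro v hv
    rw [← degY hbip M (Finset.mem_compl.1 hv)]
  have degMY : ∀ u ∈ Xᶜ, deg ends M u = f u := by
    have hle : ∀ u ∈ Xᶜ, deg ends M u ≤ f u :=
      fun u hu => degMY_le u (Finset.mem_compl.1 hu)
    exact (Finset.sum_eq_sum_iff_of_le hle).1 (by rw [hsumM_Y, hMcard, hXY])
  intro v
  by_cases hv : v ∈ X
  · exact degMX v hv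
  · exact degMY v (Finset.mem_compl.2 hv)


lemma deg_sdiff (ends : E → V × V) {M H : Finset E} (hMH : M ⊆ H) (v : V) :
    deg ends (H \ M) v = deg ends H v - deg ends M v := by
  classical
  have key : ∀ (p : E → Prop) (_ : DecidablePred p),
      ((H \ M).filter p) = (H.filter p) \ (M.filter p) := by
    intro p _
    ext e
    simp only [mem_filter, mem_sdiff]
    tauto
  unfold MG.deg
  rw [key _ _, key _ _, card_sdiff_of_subset (filter_subset_filter _ hMH),
    card_sdiff_of_subset (filter_subset_filter _ hMH)]
  have h1 := card_le_card (filter_subset_filter (fun e => (ends e).1 = v) hMH)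
  have h2 := card_le_card (filter_subset_filter (fun e => (ends e).2 = v) hMH)
  omega

end MGAux3

theorem stmt14 {V E : Type} [Fintype V] [Fintype E] [DecidableEq V] [DecidableEq E]
    (ends : E → V × V) (X : Finset V) (k q : ℕ) (hk : 0 < k) (hkq : k ≤ q)
    (hbip : ∀ e : E, ¬ (((ends e).1 ∈ X) ↔ ((ends e).2 ∈ X)))
    (f : V → ℕ) (H : Finset E)
    (hH : ∀ v : V, deg ends H v = q * f v) :
    ∃ F : Finset E, ∀ v : V, deg ends F v = k * f v := by
  obtain ⟨n, rfl⟩ : ∃ n, q = k + n := ⟨q - k, by omega⟩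
  clear hkq
  induction n generalizing H with
  | zero => exact ⟨H, by simpa using hH⟩
  | succ n ih =>
    obtain ⟨M, hMH, hM⟩ := MGAux3.extract hbip f (k + (n + 1)) (by omega) H hH
    apply ih (H \ M)
    intro v
    rw [MGAux3.deg_sdiff ends hMH v, hH v, hM v]
    have : (k + (n + 1)) * f v = (k + n) * f v + f v := by ring
    omega
end
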